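/- arXiv:1511.01721 — 5 statements merged into one kernel-verified Lean document; each statement's English description precedes it below -/
import Mathlib

section
/- Let F be a probability distribution on R^d, φ(θ) = log E[exp(⟨θ,X⟩)] its log-Laplace transform (where X has law F), and ψ(x) = sup_{θ ∈ dom(φ)} (⟨θ,x⟩ - φ(θ)) its convex conjugate. Then the relative interior of the convex hull of the support of F equals the relative interior of the domain of ψ. -/
open MeasureTheory
open scoped ENNReal

open MeasureTheory
open scoped ENNReal
open Set

variable {V : Type*} [NormedAddCommGroup V] [NormedSpace ℝ V]

theorem mem_ri_iff {s : Set V} {x : V} :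
    x ∈ intrinsicInterior ℝ s ↔ x ∈ affineSpan ℝ s ∧
      ∃ ε > (0:ℝ), ∀ y ∈ affineSpan ℝ s, dist y x < ε → y ∈ s := by
  constructor
  · rintro ⟨⟨x, hxspan⟩, hx, rfl⟩
    refine ⟨hxspan, ?_⟩
    rw [mem_interior_iff_mem_nhds, Metric.mem_nhds_iff] at hx
    obtain ⟨ε, hε, hball⟩ := hx
    refine ⟨ε, hε, fun y hy hdist => ?_⟩
    have : (⟨y, hy⟩ : affineSpan ℝ s) ∈ Metric.ball (⟨x, hxspan⟩ : affineSpan ℝ s) ε := by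
      simp [Metric.mem_ball, Subtype.dist_eq, hdist]
    exact hball this
  · rintro ⟨hxspan, ε, hε, hball⟩
    refine ⟨⟨x, hxspan⟩, ?_, rfl⟩
    rw [mem_interior_iff_mem_nhds, Metric.mem_nhds_iff]
    refine ⟨ε, hε, ?_⟩
    rintro ⟨y, hy⟩ hdist
    exact hball y hy (by simpa [Metric.mem_ball, Subtype.dist_eq] using hdist)

theorem ri_eq_ri [FiniteDimensional ℝ V] {C D : Set V} (hC : Convex ℝ C) (hne : C.Nonempty)
    (h1 : intrinsicInterior ℝ C ⊆ D) (h2 : D ⊆ closure C) :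
    intrinsicInterior ℝ C = intrinsicInterior ℝ D := by
  obtain ⟨x0, hx0⟩ := hne.intrinsicInterior hC
  obtain ⟨hx0span, ε0, hε0, hball0⟩ := mem_ri_iff.mp hx0
  -- step B : C ⊆ closure (intrinsicInterior ℝ C)
  have hBsub : C ⊆ closure (intrinsicInterior ℝ C) := by
    intro y hy
    have hyspan : y ∈ affineSpan ℝ C := subset_affineSpan ℝ C hy
    rw [Metric.mem_closure_iff]
    intro δ hδ
    obtain ⟨r, hr⟩ : ∃ r : ℝ, r = min 1 (δ / (dist x0 y + 1)) := ⟨_, rfl⟩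
    have hr0 : 0 < r := hr ▸ lt_min one_pos (by positivity)
    have hr1 : r ≤ 1 := hr ▸ min_le_left _ _
    obtain ⟨z, hz⟩ : ∃ z : V, z = y + r • (x0 - y) := ⟨_, rfl⟩
    have hzspan : z ∈ affineSpan ℝ C := by
      have := (affineSpan ℝ C).smul_vsub_vadd_mem r hx0span hyspan hyspan
      rw [hz]
      simpa [vsub_eq_sub, vadd_eq_add, add_comm] using this
    refine ⟨z, ?_, ?_⟩
    · rw [mem_ri_iff]
      refine ⟨hzspan, r * ε0, by positivity, fun w hw hdist => ?_⟩
      obtain ⟨p, hp⟩ : ∃ p : V, p = r⁻¹ • (w - z) + x0 := ⟨_, rfl⟩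
      have hpspan : p ∈ affineSpan ℝ C := by
        have := (affineSpan ℝ C).smul_vsub_vadd_mem r⁻¹ hw hzspan hx0span
        rw [hp]
        simpa [vsub_eq_sub, vadd_eq_add] using this
      have hpC : p ∈ C := by
        apply hball0 p hpspan
        have h5 : p - x0 = r⁻¹ • (w - z) := by rw [hp]; abel
        have h6 : dist p x0 = r⁻¹ * dist w z := by
          rw [dist_eq_norm, dist_eq_norm, h5, norm_smul, Real.norm_eq_abs,
            abs_of_pos (inv_pos.mpr hr0)]
        rw [h6]
        calc r⁻¹ * dist w z < r⁻¹ * (r * ε0) :=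
              mul_lt_mul_of_pos_left hdist (inv_pos.mpr hr0)
          _ = ε0 := by field_simp
      have hp1 : r • p = (w - z) + r • x0 := by
        rw [hp, smul_add, smul_smul, mul_inv_cancel₀ hr0.ne', one_smul]
      have hcomb : r • p + (1 - r) • y = w := by rw [hp1, hz]; module
      rw [← hcomb]
      exact hC hpC hy hr0.le (by linarith) (by ring)
    · have h5 : y - z = (-r) • (x0 - y) := by rw [hz]; module
      have h6 : dist y z = r * dist x0 y := by
        rw [dist_eq_norm, dist_eq_norm, h5, norm_smul, Real.norm_eq_abs, abs_neg,
          abs_of_pos hr0]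
      rw [h6]
      calc r * dist x0 y ≤ (δ / (dist x0 y + 1)) * dist x0 y :=
            mul_le_mul_of_nonneg_right (hr ▸ min_le_right _ _) dist_nonneg
        _ < δ := by
            rw [div_mul_eq_mul_div, div_lt_iff₀ (by positivity)]
            nlinarith [dist_nonneg (x := x0) (y := y)]
  -- step C : spans are equal
  have hclosC : closure C ⊆ (affineSpan ℝ C : Set V) := by
    have := closure_mono (subset_affineSpan ℝ C)
    rwa [(affineSpan ℝ C).closed_of_finiteDimensional.closure_eq] at this
  have hspan : affineSpan ℝ D = affineSpan ℝ C := by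
    apply le_antisymm
    · exact affineSpan_le.2 (h2.trans hclosC)
    · apply affineSpan_le.2
      have hclosD : closure D ⊆ (affineSpan ℝ D : Set V) := by
        have := closure_mono (subset_affineSpan ℝ D)
        rwa [(affineSpan ℝ D).closed_of_finiteDimensional.closure_eq] at this
      exact (hBsub.trans (closure_mono h1)).trans hclosD
  -- final extensionality
  ext x
  rw [mem_ri_iff, mem_ri_iff]
  simp only [hspan]
  constructor
  · rintro ⟨hxspan, ε, hε, hball⟩
    refine ⟨hxspan, ε / 2, by positivity, fun y hy hdist => ?_⟩
    apply h1
    rw [mem_ri_iff]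
    exact ⟨hy, ε / 2, by positivity, fun w hw hd => hball w hw (by
      calc dist w x ≤ dist w y + dist y x := dist_triangle _ _ _
        _ < ε / 2 + ε / 2 := add_lt_add hd hdist
        _ = ε := by ring)⟩
  · rintro ⟨hxspan, ε, hε, hballD⟩
    obtain ⟨t, ht⟩ : ∃ t : ℝ, t = ε / (2 * (dist x x0 + 1)) := ⟨_, rfl⟩
    have ht0 : 0 < t := ht ▸ by positivity
    obtain ⟨z, hz⟩ : ∃ z : V, z = x + t • (x - x0) := ⟨_, rfl⟩
    have hzspan : z ∈ affineSpan ℝ C := by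
      have := (affineSpan ℝ C).smul_vsub_vadd_mem t hxspan hx0span hxspan
      rw [hz]
      simpa [vsub_eq_sub, vadd_eq_add, add_comm] using this
    have hzD : z ∈ D := by
      apply hballD z hzspan
      have h5 : z - x = t • (x - x0) := by rw [hz]; module
      have h6 : dist z x = t * dist x x0 := by
        rw [dist_eq_norm, dist_eq_norm, h5, norm_smul, Real.norm_eq_abs, abs_of_pos ht0]
      rw [h6, ht, div_mul_eq_mul_div, div_lt_iff₀ (by positivity)]
      nlinarith [dist_nonneg (x := x) (y := x0), hε]
    have hzcl : z ∈ closure C := h2 hzD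
    obtain ⟨a, ha⟩ : ∃ a : ℝ, a = t / (1 + t) := ⟨_, rfl⟩
    obtain ⟨b, hb⟩ : ∃ b : ℝ, b = 1 / (1 + t) := ⟨_, rfl⟩
    have h1t : (0:ℝ) < 1 + t := by linarith
    have ha0 : 0 < a := ha ▸ by positivity
    have hb0 : 0 < b := hb ▸ by positivity
    have hab : a + b = 1 := by rw [ha, hb]; field_simp; ring
    have hx_comb : x = b • z + a • x0 := by
      apply smul_right_injective V h1t.ne'
      have e1 : (1 + t) * (1 / (1 + t)) = 1 := by field_simp
      have e2 : (1 + t) * (t / (1 + t)) = t := by field_simp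
      show (1 + t) • x = (1 + t) • (b • z + a • x0)
      rw [smul_add, smul_smul, smul_smul, ha, hb, e1, e2, one_smul, hz]
      module
    refine ⟨hxspan, a * ε0 / 2, by positivity, fun w hw hdist => ?_⟩
    obtain ⟨p, hpC, hpz⟩ := Metric.mem_closure_iff.mp hzcl (a * ε0 / (2 * b)) (by positivity)
    obtain ⟨q, hq⟩ : ∃ q : V, q = a⁻¹ • (w - p) + p := ⟨_, rfl⟩
    have hqspan : q ∈ affineSpan ℝ C := by
      have hpspan : p ∈ affineSpan ℝ C := subset_affineSpan ℝ C hpC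
      have := (affineSpan ℝ C).smul_vsub_vadd_mem a⁻¹ hw hpspan hpspan
      rw [hq]
      simpa [vsub_eq_sub, vadd_eq_add] using this
    have hq1 : a • q = (w - p) + a • p := by
      rw [hq, smul_add, smul_smul, mul_inv_cancel₀ ha0.ne', one_smul]
    have hqC : q ∈ C := by
      apply hball0 q hqspan
      have key : a • (q - x0) = (w - x) + b • (z - p) := by
        rw [smul_sub, hq1, hx_comb, show b = 1 - a by linarith]
        module
      have h8 : q - x0 = a⁻¹ • ((w - x) + b • (z - p)) := by
        rw [← key, smul_smul, inv_mul_cancel₀ ha0.ne', one_smul]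
      have h7 : dist q x0 = a⁻¹ * ‖(w - x) + b • (z - p)‖ := by
        rw [dist_eq_norm, h8, norm_smul, Real.norm_eq_abs, abs_of_pos (inv_pos.mpr ha0)]
      rw [h7]
      have hbound : ‖(w - x) + b • (z - p)‖ < a * ε0 / 2 + a * ε0 / 2 := by
        have hb1 : b * (a * ε0 / (2 * b)) = a * ε0 / 2 := by field_simp
        calc ‖(w - x) + b • (z - p)‖ ≤ ‖w - x‖ + ‖b • (z - p)‖ := norm_add_le _ _
          _ = ‖w - x‖ + b * ‖z - p‖ := by
              rw [norm_smul, Real.norm_eq_abs, abs_of_pos hb0]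
          _ < a * ε0 / 2 + b * (a * ε0 / (2 * b)) := by
              refine add_lt_add ?_ (mul_lt_mul_of_pos_left ?_ hb0)
              · rw [← dist_eq_norm]; exact hdist
              · rw [← dist_eq_norm]; exact hpz
          _ = a * ε0 / 2 + a * ε0 / 2 := by rw [hb1]
      calc a⁻¹ * ‖(w - x) + b • (z - p)‖ < a⁻¹ * (a * ε0 / 2 + a * ε0 / 2) :=
            mul_lt_mul_of_pos_left hbound (inv_pos.mpr ha0)
        _ = ε0 := by field_simp; ring
    have hwcomb : b • p + a • q = w := by
      rw [hq1, show b = 1 - a by linarith]; module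
    rw [← hwcomb]
    exact hC hpC hqC hb0.le ha0.le (by linarith)

variable {d : ℕ}

theorem muS_compl (μ : Measure (Fin d → ℝ)) :
    μ ({x | ∀ U ∈ nhds x, 0 < μ U}ᶜ) = 0 := by
  set 𝒰 : Set (Set (Fin d → ℝ)) := {U | IsOpen U ∧ μ U = 0} with h𝒰
  obtain ⟨T, hTc, hTsub, hTU⟩ :=
    TopologicalSpace.isOpen_sUnion_countable 𝒰 (fun s hs => hs.1)
  have hUn : μ (⋃₀ 𝒰) = 0 := by
    rw [← hTU]
    exact (measure_sUnion_null_iff hTc).mpr (fun s hs => (hTsub hs).2)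
  refine measure_mono_null (fun x hx => ?_) hUn
  simp only [mem_compl_iff, mem_setOf_eq, not_forall] at hx
  obtain ⟨U, hU, hU0⟩ := hx
  obtain ⟨V, hVU, hVopen, hxV⟩ := mem_nhds_iff.mp hU
  exact ⟨V, ⟨hVopen, le_antisymm ((measure_mono hVU).trans (by simpa [le_zero_iff] using hU0))
    (zero_le)⟩, hxV⟩

theorem isClosed_S (μ : Measure (Fin d → ℝ)) :
    IsClosed {x | ∀ U ∈ nhds x, 0 < μ U} := by
  rw [← isOpen_compl_iff, isOpen_iff_mem_nhds]
  intro x hx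
  simp only [mem_compl_iff, mem_setOf_eq, not_forall] at hx
  obtain ⟨U, hU, hU0⟩ := hx
  refine Filter.mem_of_superset (interior_mem_nhds.mpr hU) (fun y hy => ?_)
  simp only [mem_compl_iff, mem_setOf_eq, not_forall]
  refine ⟨interior U, isOpen_interior.mem_nhds hy, ?_⟩
  intro hpos
  exact hU0 (lt_of_lt_of_le hpos (measure_mono interior_subset))

theorem S_nonempty (μ : Measure (Fin d → ℝ)) [IsProbabilityMeasure μ] :
    {x | ∀ U ∈ nhds x, 0 < μ U}.Nonempty := by
  by_contra h
  rw [not_nonempty_iff_eq_empty] at h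
  have := muS_compl μ
  rw [h, compl_empty, measure_univ] at this
  simp at this

theorem psi_top_outside (μ : Measure (Fin d → ℝ)) [IsProbabilityMeasure μ]
    (L : (Fin d → ℝ) → ℝ≥0∞)
    (hL : ∀ θ, L θ = ∫⁻ x, ENNReal.ofReal (Real.exp (∑ i, θ i * x i)) ∂μ)
    (φ : (Fin d → ℝ) → EReal)
    (hφ : ∀ θ, φ θ = if L θ = ⊤ then (⊤ : EReal) else ((Real.log (L θ).toReal : ℝ) : EReal))
    (ψ : (Fin d → ℝ) → EReal)
    (hψ : ∀ x, ψ x = ⨆ θ ∈ {θ | L θ ≠ ⊤}, (((∑ i, θ i * x i : ℝ)) : EReal) - φ θ)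
    {x : Fin d → ℝ}
    (hx : x ∉ closure (convexHull ℝ {x | ∀ U ∈ nhds x, 0 < μ U})) :
    ψ x = ⊤ := by
  set S : Set (Fin d → ℝ) := {x | ∀ U ∈ nhds x, 0 < μ U} with hS
  have haeS : ∀ᵐ y ∂μ, y ∈ S := by
    rw [ae_iff]
    exact muS_compl μ
  obtain ⟨f, u, hfu, hux⟩ := geometric_hahn_banach_closed_point
    ((convex_convexHull ℝ S).closure) isClosed_closure hx
  set θ : Fin d → ℝ := fun i => f (Pi.single i 1) with hθ
  have hfv : ∀ v : Fin d → ℝ, (∑ i, θ i * v i) = f v := by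
    intro v
    conv_rhs => rw [(Finset.univ_sum_single v).symm]
    rw [map_sum]
    refine Finset.sum_congr rfl (fun i _ => ?_)
    have h1 : (Pi.single i (v i) : Fin d → ℝ) = v i • (Pi.single i 1 : Fin d → ℝ) := by
      have h2 := Pi.single_smul (f := fun _ : Fin d => ℝ) i (v i) (1:ℝ)
      simpa using h2
    rw [h1, f.map_smul, smul_eq_mul]; exact mul_comm _ _
  have hmeas : ∀ ξ : Fin d → ℝ, Measurable fun y : Fin d → ℝ =>
      ENNReal.ofReal (Real.exp (∑ i, ξ i * y i)) := by
    intro ξ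
    apply ENNReal.measurable_ofReal.comp
    apply Real.continuous_exp.measurable.comp
    exact (continuous_finset_sum _ (fun i _ => (continuous_const.mul
      (continuous_apply i)))).measurable
  have hpos : ∀ ξ, 0 < L ξ := by
    intro ξ
    rw [hL, lintegral_pos_iff_support (hmeas ξ)]
    have : Function.support (fun y : Fin d → ℝ => ENNReal.ofReal (Real.exp (∑ i, ξ i * y i)))
        = univ := by
      ext y
      simp [Function.mem_support, ENNReal.ofReal_eq_zero, not_le, Real.exp_pos]
    rw [this, measure_univ]
    simp
  have hbound : ∀ n : ℕ, L ((n:ℝ) • θ) ≤ ENNReal.ofReal (Real.exp (n * u)) := by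
    intro n
    rw [hL]
    have hae : ∀ᵐ y ∂μ, ENNReal.ofReal (Real.exp (∑ i, ((n:ℝ) • θ) i * y i))
        ≤ ENNReal.ofReal (Real.exp (n * u)) := by
      filter_upwards [haeS] with y hy
      apply ENNReal.ofReal_le_ofReal
      apply Real.exp_le_exp.mpr
      have h1 : ∑ i, ((n:ℝ) • θ) i * y i = (n:ℝ) * ∑ i, θ i * y i := by
        rw [Finset.mul_sum]
        exact Finset.sum_congr rfl (fun i _ => by simp [mul_assoc])
      rw [h1, hfv]
      have hfy : f y < u := hfu y (subset_closure (subset_convexHull ℝ S hy))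
      exact mul_le_mul_of_nonneg_left hfy.le (Nat.cast_nonneg n)
    calc ∫⁻ y, ENNReal.ofReal (Real.exp (∑ i, ((n:ℝ) • θ) i * y i)) ∂μ
        ≤ ∫⁻ _, ENNReal.ofReal (Real.exp (n * u)) ∂μ := lintegral_mono_ae hae
      _ = ENNReal.ofReal (Real.exp (n * u)) := by rw [lintegral_const, measure_univ, mul_one]
  have hterm : ∀ n : ℕ, (((n:ℝ) * (f x - u) : ℝ) : EReal) ≤ ψ x := by
    intro n
    have hLne : L ((n:ℝ) • θ) ≠ ⊤ := ne_top_of_le_ne_top ENNReal.ofReal_ne_top (hbound n)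
    have hφn : φ ((n:ℝ) • θ) ≤ (((n:ℝ) * u : ℝ) : EReal) := by
      rw [hφ, if_neg hLne]
      apply EReal.coe_le_coe_iff.mpr
      have h1 : (L ((n:ℝ) • θ)).toReal ≤ Real.exp (n * u) := by
        have := ENNReal.toReal_mono ENNReal.ofReal_ne_top (hbound n)
        rwa [ENNReal.toReal_ofReal (Real.exp_nonneg _)] at this
      have h2 : 0 < (L ((n:ℝ) • θ)).toReal := ENNReal.toReal_pos (hpos _).ne' hLne
      calc Real.log (L ((n:ℝ) • θ)).toReal ≤ Real.log (Real.exp (n * u)) :=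
            Real.log_le_log h2 h1
        _ = n * u := Real.log_exp _
    have hsum : (∑ i, ((n:ℝ) • θ) i * x i : ℝ) = (n:ℝ) * f x := by
      rw [← hfv x, Finset.mul_sum]
      exact Finset.sum_congr rfl (fun i _ => by simp [mul_assoc])
    have hle : (((∑ i, ((n:ℝ) • θ) i * x i : ℝ)) : EReal) - φ ((n:ℝ) • θ) ≤ ψ x := by
      rw [hψ]
      exact le_biSup (f := fun θ' => (((∑ i, θ' i * x i : ℝ)) : EReal) - φ θ')
        (s := {θ' | L θ' ≠ ⊤}) hLne
    refine le_trans ?_ hle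
    rw [hsum]
    calc (((n:ℝ) * (f x - u) : ℝ) : EReal)
        = (((n:ℝ) * f x : ℝ) : EReal) - (((n:ℝ) * u : ℝ) : EReal) := by
          rw [← EReal.coe_sub, EReal.coe_eq_coe_iff]; ring
      _ ≤ (((n:ℝ) * f x : ℝ) : EReal) - φ ((n:ℝ) • θ) := EReal.sub_le_sub le_rfl hφn
  rw [EReal.eq_top_iff_forall_lt]
  intro y
  have hcu : 0 < f x - u := by linarith
  obtain ⟨n, hn⟩ := exists_nat_gt (y / (f x - u))
  have : y < (n:ℝ) * (f x - u) := by
    rw [div_lt_iff₀ hcu] at hn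
    linarith
  calc (y : EReal) < (((n:ℝ) * (f x - u) : ℝ) : EReal) := EReal.coe_lt_coe_iff.mpr this
    _ ≤ ψ x := hterm n

theorem proj_exists {d : ℕ} (W : Submodule ℝ (Fin d → ℝ)) (θ : Fin d → ℝ) :
    ∃ w ∈ W, ∀ v ∈ W, ∑ i, θ i * v i = ∑ i, w i * v i := by
  set e := (WithLp.linearEquiv 2 ℝ (Fin d → ℝ)).symm with he
  set W' : Submodule ℝ (EuclideanSpace ℝ (Fin d)) := W.map (e : (Fin d → ℝ) →ₗ[ℝ] _) with hW'
  set w' : EuclideanSpace ℝ (Fin d) := (W'.orthogonalProjectionOnto (e θ) : EuclideanSpace ℝ (Fin d))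
    with hw'
  have hw'mem : w' ∈ W' := (W'.orthogonalProjectionOnto (e θ)).2
  obtain ⟨w, hwW, hww⟩ := Submodule.mem_map.mp hw'mem
  refine ⟨w, hwW, fun v hv => ?_⟩
  have hperp : (e θ) - w' ∈ W'ᗮ := by
    rw [hw']; exact Submodule.sub_starProjection_mem_orthogonal (e θ)
  have hvW' : (e v : EuclideanSpace ℝ (Fin d)) ∈ W' := Submodule.mem_map.mpr ⟨v, hv, rfl⟩
  have hzero : inner ℝ ((e θ) - w') (e v) = (0:ℝ) := by
    rw [real_inner_comm]
    exact (Submodule.mem_orthogonal W' _).mp hperp _ hvW'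
  have hinner : inner ℝ (e θ) (e v) = (inner ℝ w' (e v) : ℝ) := by
    have := inner_sub_left (𝕜 := ℝ) (e θ) w' (e v)
    rw [hzero] at this
    linarith
  rw [← hww] at hinner
  simpa [PiLp.inner_apply, RCLike.inner_apply, WithLp.linearEquiv_symm_apply,
    he, mul_comm] using hinner

theorem unif_mass {d : ℕ} (μ : Measure (Fin d → ℝ)) [IsProbabilityMeasure μ]
    (S : Set (Fin d → ℝ)) (hSmass : ∀ z ∈ S, ∀ U ∈ nhds z, 0 < μ U)
    (W : Submodule ℝ (Fin d → ℝ)) (x : Fin d → ℝ) {ε : ℝ} (hε : 0 < ε)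
    (hdir : ∀ u ∈ W, ‖u‖ = 1 → ∃ z ∈ S, ε/2 ≤ ∑ i, u i * (z i - x i)) :
    ∃ c0 : ℝ, 0 < c0 ∧ c0 ≤ 1 ∧ ∀ u ∈ W, ‖u‖ = 1 →
      ENNReal.ofReal c0 ≤ μ {y | ε/8 < ∑ i, u i * (y i - x i)} := by
  have step2 : ∀ u : Fin d → ℝ, u ∈ W → ‖u‖ = 1 → ∃ R : ℝ, 0 < R ∧
      0 < μ ({y | ε/4 < ∑ i, u i * (y i - x i)} ∩ Metric.ball x R) := by
    intro u hu hnu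
    obtain ⟨z, hzS, hz⟩ := hdir u hu hnu
    have hOopen : IsOpen {y : Fin d → ℝ | ε/4 < ∑ i, u i * (y i - x i)} := by
      have hc : Continuous fun y : Fin d → ℝ => ∑ i, u i * (y i - x i) :=
        continuous_finset_sum _ fun i _ =>
          continuous_const.mul ((continuous_apply i).sub continuous_const)
      exact isOpen_lt continuous_const hc
    have hzO : z ∈ {y : Fin d → ℝ | ε/4 < ∑ i, u i * (y i - x i)} := by
      simp only [Set.mem_setOf_eq]; linarith
    have hOpos : 0 < μ {y : Fin d → ℝ | ε/4 < ∑ i, u i * (y i - x i)} :=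
      hSmass z hzS _ (hOopen.mem_nhds hzO)
    have hdirected : Directed (· ⊆ ·)
        (fun n : ℕ => {y : Fin d → ℝ | ε/4 < ∑ i, u i * (y i - x i)} ∩ Metric.ball x n) := by
      intro m n
      refine ⟨max m n, Set.inter_subset_inter_right _ (Metric.ball_subset_ball ?_),
        Set.inter_subset_inter_right _ (Metric.ball_subset_ball ?_)⟩
      · exact_mod_cast le_max_left m n
      · exact_mod_cast le_max_right m n
    have hunion : ⋃ n : ℕ,
        ({y : Fin d → ℝ | ε/4 < ∑ i, u i * (y i - x i)} ∩ Metric.ball x n)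
        = {y : Fin d → ℝ | ε/4 < ∑ i, u i * (y i - x i)} := by
      ext y
      simp only [Set.mem_iUnion, Set.mem_inter_iff]
      constructor
      · rintro ⟨n, hy, _⟩; exact hy
      · intro hy
        obtain ⟨n, hn⟩ := exists_nat_gt (dist y x)
        exact ⟨n, hy, by simpa [Metric.mem_ball] using hn⟩
    have hsup := Directed.measure_iUnion (μ := μ) hdirected
    rw [hunion] at hsup
    rw [hsup] at hOpos
    obtain ⟨n, hn⟩ := lt_iSup_iff.mp hOpos
    refine ⟨(n:ℝ) + 1, by positivity, lt_of_lt_of_le hn (measure_mono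
      (Set.inter_subset_inter_right _ (Metric.ball_subset_ball (by linarith))))⟩
  choose! R hR0 hRpos using step2
  set Ksph : Set (Fin d → ℝ) := {u | u ∈ W ∧ ‖u‖ = 1} with hKsph
  have hKcp : IsCompact Ksph := by
    rw [Metric.isCompact_iff_isClosed_bounded]
    constructor
    · have : Ksph = (W : Set (Fin d → ℝ)) ∩ {u | ‖u‖ = 1} := rfl
      rw [this]
      exact (Submodule.closed_of_finiteDimensional W).inter
        (isClosed_eq continuous_norm continuous_const)
    · refine Bornology.IsBounded.subset (Metric.isBounded_closedBall (x := 0) (r := 1))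
        (fun u hu => ?_)
      simp only [Metric.mem_closedBall, dist_zero_right]
      exact le_of_eq hu.2
  obtain ⟨t, ht⟩ := hKcp.elim_finite_subcover
    (fun v : {u : Fin d → ℝ // u ∈ Ksph} => Metric.ball v.1 ((ε/8) / (d * R v.1 + 1)))
    (fun v => Metric.isOpen_ball)
    (by
      intro u hu
      refine Set.mem_iUnion.mpr ⟨⟨u, hu⟩, ?_⟩
      simp only [Metric.mem_ball, dist_self]
      have hRu : 0 < R u := hR0 u hu.1 hu.2
      positivity)
  by_cases htne : t.Nonempty
  · set m : {u : Fin d → ℝ // u ∈ Ksph} → ℝ := fun v =>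
      (μ ({y | ε/4 < ∑ i, v.1 i * (y i - x i)} ∩ Metric.ball x (R v.1))).toReal with hm
    refine ⟨min (t.inf' htne m) 1, ?_, min_le_right _ _, ?_⟩
    · refine lt_min ?_ one_pos
      rw [Finset.lt_inf'_iff]
      intro v hv
      exact ENNReal.toReal_pos (hRpos v.1 v.2.1 v.2.2).ne' (measure_ne_top μ _)
    · intro u hu hnu
      have humem : u ∈ Ksph := ⟨hu, hnu⟩
      obtain ⟨v, hvt, hv⟩ : ∃ v ∈ t, u ∈ Metric.ball v.1 ((ε/8) / (d * R v.1 + 1)) := by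
        have := ht humem
        simpa using this
      have hRv : 0 < R v.1 := hR0 v.1 v.2.1 v.2.2
      have hsub : {y | ε/4 < ∑ i, v.1 i * (y i - x i)} ∩ Metric.ball x (R v.1)
          ⊆ {y | ε/8 < ∑ i, u i * (y i - x i)} := by
        rintro y ⟨hy1, hy2⟩
        simp only [Set.mem_setOf_eq] at hy1 ⊢
        have hdist : ‖u - v.1‖ < (ε/8) / (d * R v.1 + 1) := by
          rw [← dist_eq_norm]; exact hv
        have hyx : dist y x < R v.1 := hy2
        have hterm : ∀ i, |(u i - v.1 i) * (y i - x i)| ≤ ‖u - v.1‖ * R v.1 := by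
          intro i
          rw [abs_mul]
          have h1 : |u i - v.1 i| ≤ ‖u - v.1‖ := by
            have := norm_le_pi_norm (u - v.1) i
            simpa [Real.norm_eq_abs] using this
          have h2 : |y i - x i| ≤ R v.1 := by
            have := norm_le_pi_norm (y - x) i
            simp only [Pi.sub_apply, Real.norm_eq_abs] at this
            calc |y i - x i| ≤ ‖y - x‖ := this
              _ = dist y x := (dist_eq_norm y x).symm
              _ ≤ R v.1 := hyx.le
          exact mul_le_mul h1 h2 (abs_nonneg _) (norm_nonneg _)
        have hsumdiff : |∑ i, (u i - v.1 i) * (y i - x i)| ≤ d * (‖u - v.1‖ * R v.1) := by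
          calc |∑ i, (u i - v.1 i) * (y i - x i)| ≤ ∑ i, |(u i - v.1 i) * (y i - x i)| :=
                Finset.abs_sum_le_sum_abs _ _
            _ ≤ ∑ _i : Fin d, ‖u - v.1‖ * R v.1 := Finset.sum_le_sum (fun i _ => hterm i)
            _ = d * (‖u - v.1‖ * R v.1) := by
                rw [Finset.sum_const, Finset.card_univ, Fintype.card_fin, nsmul_eq_mul]
        have hsplit : ∑ i, u i * (y i - x i)
            = ∑ i, v.1 i * (y i - x i) + ∑ i, (u i - v.1 i) * (y i - x i) := by
          rw [← Finset.sum_add_distrib]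
          exact Finset.sum_congr rfl (fun i _ => by ring)
        have hsmall : d * (‖u - v.1‖ * R v.1) < ε/8 := by
          have hd0 : (0:ℝ) ≤ d := Nat.cast_nonneg d
          have h3 : (0:ℝ) < d * R v.1 + 1 := by positivity
          calc d * (‖u - v.1‖ * R v.1) = ‖u - v.1‖ * (d * R v.1) := by ring
            _ ≤ ((ε/8) / (d * R v.1 + 1)) * (d * R v.1) :=
                mul_le_mul_of_nonneg_right hdist.le (by positivity)
            _ < ε/8 := by
                rw [div_mul_eq_mul_div, div_lt_iff₀ h3]
                nlinarith [hε]
        have habs := (abs_le.mp hsumdiff).1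
        rw [hsplit]
        linarith
      calc ENNReal.ofReal (min (t.inf' htne m) 1) ≤ ENNReal.ofReal (m v) :=
            ENNReal.ofReal_le_ofReal (le_trans (min_le_left _ _) (Finset.inf'_le m hvt))
        _ = μ ({y | ε/4 < ∑ i, v.1 i * (y i - x i)} ∩ Metric.ball x (R v.1)) :=
            ENNReal.ofReal_toReal (measure_ne_top μ _)
        _ ≤ μ {y | ε/8 < ∑ i, u i * (y i - x i)} := measure_mono hsub
  · refine ⟨1, one_pos, le_rfl, fun u hu hnu => ?_⟩
    rw [Finset.not_nonempty_iff_eq_empty] at htne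
    have hmem := ht (show u ∈ Ksph from ⟨hu, hnu⟩)
    rw [htne] at hmem
    simp at hmem

theorem dir_sep {d : ℕ} (S : Set (Fin d → ℝ)) {x : Fin d → ℝ} {ε : ℝ} (hε : 0 < ε)
    (hxspan : x ∈ affineSpan ℝ S)
    (hball : ∀ y ∈ affineSpan ℝ S, dist y x < ε → y ∈ convexHull ℝ S) :
    ∀ u ∈ (affineSpan ℝ S).direction, ‖u‖ = 1 →
      ∃ z ∈ S, ε/2 ≤ ∑ i, u i * (z i - x i) := by
  intro u hu hnu
  have hz0span : x + (ε/2) • u ∈ affineSpan ℝ S := by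
    have := AffineSubspace.vadd_mem_of_mem_direction
      (Submodule.smul_mem _ (ε/2) hu) hxspan
    simpa [vadd_eq_add, add_comm] using this
  have hz0C : x + (ε/2) • u ∈ convexHull ℝ S := by
    apply hball _ hz0span
    have hd : dist (x + (ε/2) • u) x = ε/2 := by
      rw [dist_eq_norm, add_sub_cancel_left, norm_smul, Real.norm_eq_abs,
        abs_of_pos (half_pos hε), hnu, mul_one]
    rw [hd]; linarith
  by_contra hcon
  push_neg at hcon
  have hlin : IsLinearMap ℝ (fun v : Fin d → ℝ => ∑ i, u i * v i) := by
    constructor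
    · intro a b
      rw [← Finset.sum_add_distrib]
      exact Finset.sum_congr rfl fun i _ => by simp [Pi.add_apply]; ring
    · intro c a
      simp only [smul_eq_mul, Finset.mul_sum]
      exact Finset.sum_congr rfl fun i _ => by simp [Pi.smul_apply, smul_eq_mul]; ring
  have hconv : Convex ℝ {v : Fin d → ℝ | ∑ i, u i * v i < ε/2 + ∑ i, u i * x i} :=
    convex_halfSpace_lt hlin _
  have hsub : convexHull ℝ S ⊆ {v : Fin d → ℝ | ∑ i, u i * v i < ε/2 + ∑ i, u i * x i} := by
    apply convexHull_min ?_ hconv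
    intro z hz
    have h1 := hcon z hz
    have hsplit : ∑ i, u i * (z i - x i) = ∑ i, u i * z i - ∑ i, u i * x i := by
      rw [← Finset.sum_sub_distrib]
      exact Finset.sum_congr rfl fun i _ => by ring
    rw [hsplit] at h1
    simp only [mem_setOf_eq]
    linarith
  have hfz0 := hsub hz0C
  simp only [mem_setOf_eq] at hfz0
  have hc : ∑ i, u i * (x + (ε/2) • u) i = ∑ i, u i * x i + (ε/2) * ∑ i, u i * u i := by
    rw [Finset.mul_sum, ← Finset.sum_add_distrib]
    exact Finset.sum_congr rfl fun i _ => by simp [Pi.add_apply, Pi.smul_apply, smul_eq_mul]; ring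
  have hq : (1:ℝ) ≤ ∑ i, u i * u i := by
    by_contra hlt
    push_neg at hlt
    have hall : ∀ i, ‖u i‖ < 1 := by
      intro i
      have h5 : u i * u i ≤ ∑ j, u j * u j := by
        simpa using Finset.single_le_sum (f := fun j => u j * u j)
          (fun j _ => mul_self_nonneg (u j)) (Finset.mem_univ i)
      rw [Real.norm_eq_abs]
      by_contra hge
      push_neg at hge
      nlinarith [abs_mul_abs_self (u i), abs_nonneg (u i)]
    have : ‖u‖ < 1 := (pi_norm_lt_iff one_pos).mpr hall
    linarith [hnu ▸ this]
  rw [hc] at hfz0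
  nlinarith

theorem psi_ne_top_ri {d : ℕ} (μ : Measure (Fin d → ℝ)) [IsProbabilityMeasure μ]
    (L : (Fin d → ℝ) → ℝ≥0∞)
    (hL : ∀ θ, L θ = ∫⁻ x, ENNReal.ofReal (Real.exp (∑ i, θ i * x i)) ∂μ)
    (φ : (Fin d → ℝ) → EReal)
    (hφ : ∀ θ, φ θ = if L θ = ⊤ then (⊤ : EReal) else ((Real.log (L θ).toReal : ℝ) : EReal))
    (ψ : (Fin d → ℝ) → EReal)
    (hψ : ∀ x, ψ x = ⨆ θ ∈ {θ | L θ ≠ ⊤}, (((∑ i, θ i * x i : ℝ)) : EReal) - φ θ)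
    {x : Fin d → ℝ}
    (hx : x ∈ intrinsicInterior ℝ (convexHull ℝ {x | ∀ U ∈ nhds x, 0 < μ U})) :
    ψ x ≠ ⊤ := by
  set S : Set (Fin d → ℝ) := {x | ∀ U ∈ nhds x, 0 < μ U} with hS
  obtain ⟨hxspan', ε, hε, hball'⟩ := mem_ri_iff.mp hx
  rw [affineSpan_convexHull] at hxspan'
  have hball : ∀ y ∈ affineSpan ℝ S, dist y x < ε → y ∈ convexHull ℝ S := by
    intro y hy hd
    exact hball' y (by rw [affineSpan_convexHull]; exact hy) hd
  have hdir := dir_sep S hε hxspan' hball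
  have hSmass : ∀ z ∈ S, ∀ U ∈ nhds z, 0 < μ U := fun z hz => hz
  obtain ⟨c0, hc0, hc01, hunif⟩ :=
    unif_mass μ S hSmass (affineSpan ℝ S).direction x hε hdir
  have haeS : ∀ᵐ y ∂μ, y ∈ S := by
    rw [ae_iff]
    exact muS_compl μ
  have hmeas : ∀ ξ : Fin d → ℝ, Measurable fun y : Fin d → ℝ =>
      ENNReal.ofReal (Real.exp (∑ i, ξ i * y i)) := by
    intro ξ
    apply ENNReal.measurable_ofReal.comp
    apply Real.continuous_exp.measurable.comp
    exact (continuous_finset_sum _ (fun i _ => (continuous_const.mul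
      (continuous_apply i)))).measurable
  have key : ∀ θ : Fin d → ℝ, ENNReal.ofReal (c0 * Real.exp (∑ i, θ i * x i)) ≤ L θ := by
    intro θ
    obtain ⟨w, hwW, hwrep⟩ := proj_exists (affineSpan ℝ S).direction θ
    have hrepS : ∀ y ∈ S, ∑ i, θ i * y i - ∑ i, θ i * x i = ∑ i, w i * (y i - x i) := by
      intro y hy
      have hyx : y - x ∈ (affineSpan ℝ S).direction := by
        have := AffineSubspace.vsub_mem_direction (subset_affineSpan ℝ S hy) hxspan'
        simpa [vsub_eq_sub] using this
      have hrep := hwrep (y - x) hyx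
      have h1 : ∑ i, θ i * (y - x) i = ∑ i, θ i * y i - ∑ i, θ i * x i := by
        rw [← Finset.sum_sub_distrib]
        exact Finset.sum_congr rfl fun i _ => by simp [Pi.sub_apply]; ring
      have h2 : ∑ i, w i * (y - x) i = ∑ i, w i * (y i - x i) :=
        Finset.sum_congr rfl fun i _ => by simp [Pi.sub_apply]
      rw [← h1, hrep, h2]
    by_cases hw : w = 0
    · have hptwise : ∀ᵐ y ∂μ, ENNReal.ofReal (c0 * Real.exp (∑ i, θ i * x i))
          ≤ ENNReal.ofReal (Real.exp (∑ i, θ i * y i)) := by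
        filter_upwards [haeS] with y hy
        apply ENNReal.ofReal_le_ofReal
        have h0 := hrepS y hy
        rw [hw] at h0
        simp only [Pi.zero_apply, zero_mul, Finset.sum_const_zero] at h0
        have heq : ∑ i, θ i * y i = ∑ i, θ i * x i := by linarith
        rw [heq]
        nlinarith [Real.exp_pos (∑ i, θ i * x i)]
      calc ENNReal.ofReal (c0 * Real.exp (∑ i, θ i * x i))
          = ∫⁻ _, ENNReal.ofReal (c0 * Real.exp (∑ i, θ i * x i)) ∂μ := by
            rw [lintegral_const, measure_univ, mul_one]
        _ ≤ ∫⁻ y, ENNReal.ofReal (Real.exp (∑ i, θ i * y i)) ∂μ := lintegral_mono_ae hptwise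
        _ = L θ := (hL θ).symm
    · obtain ⟨u, hu⟩ : ∃ u : Fin d → ℝ, u = ‖w‖⁻¹ • w := ⟨_, rfl⟩
      have hwn : 0 < ‖w‖ := norm_pos_iff.mpr hw
      have huW : u ∈ (affineSpan ℝ S).direction := hu ▸ Submodule.smul_mem _ _ hwW
      have hun : ‖u‖ = 1 := by
        rw [hu, norm_smul, Real.norm_eq_abs, abs_of_pos (inv_pos.mpr hwn),
          inv_mul_cancel₀ hwn.ne']
      have hG := hunif u huW hun
      have hGS : ENNReal.ofReal c0
          ≤ μ ({y | ε/8 < ∑ i, u i * (y i - x i)} ∩ S) := by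
        have h1 : μ ({y | ε/8 < ∑ i, u i * (y i - x i)} \ S) = 0 :=
          measure_mono_null (fun y hy => hy.2) (muS_compl μ)
        have h2 := measure_le_inter_add_diff μ {y | ε/8 < ∑ i, u i * (y i - x i)} S
        rw [h1, add_zero] at h2
        exact le_trans hG h2
      have hpt : ∀ y ∈ ({y | ε/8 < ∑ i, u i * (y i - x i)} ∩ S),
          ENNReal.ofReal (Real.exp (∑ i, θ i * x i))
            ≤ ENNReal.ofReal (Real.exp (∑ i, θ i * y i)) := by
        rintro y ⟨hyG, hyS⟩
        apply ENNReal.ofReal_le_ofReal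
        apply Real.exp_le_exp.mpr
        have h0 := hrepS y hyS
        have h1 : ∑ i, w i * (y i - x i) = ‖w‖ * ∑ i, u i * (y i - x i) := by
          rw [Finset.mul_sum]
          refine Finset.sum_congr rfl fun i _ => ?_
          rw [hu]
          simp only [Pi.smul_apply, smul_eq_mul]
          field_simp
        have h2 : (0:ℝ) < ∑ i, u i * (y i - x i) := lt_trans (by positivity) hyG
        nlinarith [hwn]
      calc ENNReal.ofReal (c0 * Real.exp (∑ i, θ i * x i))
          = ENNReal.ofReal (Real.exp (∑ i, θ i * x i)) * ENNReal.ofReal c0 := by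
            rw [← ENNReal.ofReal_mul (Real.exp_nonneg _), mul_comm]
        _ ≤ ENNReal.ofReal (Real.exp (∑ i, θ i * x i))
            * μ ({y | ε/8 < ∑ i, u i * (y i - x i)} ∩ S) := mul_le_mul_right hGS _
        _ = ∫⁻ _ in ({y | ε/8 < ∑ i, u i * (y i - x i)} ∩ S),
            ENNReal.ofReal (Real.exp (∑ i, θ i * x i)) ∂μ := (setLIntegral_const _ _).symm
        _ ≤ ∫⁻ y in ({y | ε/8 < ∑ i, u i * (y i - x i)} ∩ S),
            ENNReal.ofReal (Real.exp (∑ i, θ i * y i)) ∂μ := setLIntegral_mono (hmeas θ) hpt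
        _ ≤ ∫⁻ y, ENNReal.ofReal (Real.exp (∑ i, θ i * y i)) ∂μ :=
            setLIntegral_le_lintegral _ _
        _ = L θ := (hL θ).symm
  have hbound : ∀ θ ∈ {θ : Fin d → ℝ | L θ ≠ ⊤},
      (((∑ i, θ i * x i : ℝ)) : EReal) - φ θ ≤ ((- Real.log c0 : ℝ) : EReal) := by
    intro θ hθ
    rw [hφ, if_neg hθ, ← EReal.coe_sub]
    apply EReal.coe_le_coe_iff.mpr
    have h1 : c0 * Real.exp (∑ i, θ i * x i) ≤ (L θ).toReal := by
      have := ENNReal.toReal_mono hθ (key θ)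
      rwa [ENNReal.toReal_ofReal (by positivity)] at this
    have h2 : Real.log (c0 * Real.exp (∑ i, θ i * x i)) ≤ Real.log (L θ).toReal :=
      Real.log_le_log (by positivity) h1
    rw [Real.log_mul hc0.ne' (Real.exp_pos _).ne', Real.log_exp] at h2
    linarith
  rw [hψ]
  exact ne_top_of_le_ne_top (EReal.coe_ne_top _) (iSup₂_le hbound)

/-- the relative interior of the convex hull of the support of a
probability distribution `F` on `ℝ^d` equals the relative interior of the domain
of the Legendre conjugate `ψ` of its log-Laplace transform `φ`. -/
theorem intrinsicInterior_convexHull_support_eq_domain_conjugate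
    (d : ℕ) (μ : Measure (Fin d → ℝ)) [IsProbabilityMeasure μ]
    (L : (Fin d → ℝ) → ℝ≥0∞)
    (hL : ∀ θ, L θ = ∫⁻ x, ENNReal.ofReal (Real.exp (∑ i, θ i * x i)) ∂μ)
    (φ : (Fin d → ℝ) → EReal)
    (hφ : ∀ θ, φ θ = if L θ = ⊤ then (⊤ : EReal) else ((Real.log (L θ).toReal : ℝ) : EReal))
    (ψ : (Fin d → ℝ) → EReal)
    (hψ : ∀ x, ψ x = ⨆ θ ∈ {θ | L θ ≠ ⊤}, (((∑ i, θ i * x i : ℝ)) : EReal) - φ θ) :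
    intrinsicInterior ℝ (convexHull ℝ {x | ∀ U ∈ nhds x, 0 < μ U})
      = intrinsicInterior ℝ {x | ψ x ≠ ⊤} := by
  obtain ⟨z, hz⟩ := S_nonempty μ
  refine ri_eq_ri (convex_convexHull ℝ _) ⟨z, subset_convexHull ℝ _ hz⟩ ?_ ?_
  · intro x hx
    exact psi_ne_top_ri μ L hL φ hφ ψ hψ hx
  · intro x hxD
    by_contra hxcl
    exact hxD (psi_top_outside μ L hL φ hφ ψ hψ hxcl)
end

section
/- Let F be a probability distribution on R^d, φ its log-Laplace transform and ψ its convex conjugate. If ψ(x) = 0 then x belongs to the relative interior of the domain of ψ. -/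
open MeasureTheory
open scoped ENNReal

namespace CramerAux
open Real Filter
open scoped Topology

variable {d : ℕ}

def dot (θ z : Fin d → ℝ) : ℝ := ∑ i, θ i * z i

lemma dot_smul_left (s : ℝ) (θ z : Fin d → ℝ) : dot (s • θ) z = s * dot θ z := by
  simp [dot, Finset.mul_sum, mul_assoc]

lemma dot_add_left (θ₁ θ₂ z : Fin d → ℝ) : dot (θ₁ + θ₂) z = dot θ₁ z + dot θ₂ z := by
  simp [dot, add_mul, Finset.sum_add_distrib]

lemma dot_zero_left (z : Fin d → ℝ) : dot (0 : Fin d → ℝ) z = 0 := by simp [dot]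

lemma dot_sub_right (θ z₁ z₂ : Fin d → ℝ) : dot θ (z₁ - z₂) = dot θ z₁ - dot θ z₂ := by
  simp [dot, mul_sub, Finset.sum_sub_distrib]

lemma dot_smul_add_right (θ : Fin d → ℝ) (c : ℝ) (v w : Fin d → ℝ) :
    dot θ (c • v + w) = c * dot θ v + dot θ w := by
  simp [dot, mul_add, Finset.sum_add_distrib, Finset.mul_sum, mul_left_comm]

lemma dot_abs_le (θ v : Fin d → ℝ) : dot θ v ≤ d * (‖θ‖ * ‖v‖) := by
  calc dot θ v ≤ ∑ _i : Fin d, ‖θ‖ * ‖v‖ := by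
        refine Finset.sum_le_sum fun i _ => ?_
        calc θ i * v i ≤ |θ i * v i| := le_abs_self _
        _ = |θ i| * |v i| := abs_mul _ _
        _ ≤ ‖θ‖ * ‖v‖ := by
            exact mul_le_mul (norm_le_pi_norm θ i) (norm_le_pi_norm v i) (abs_nonneg _)
              (norm_nonneg _)
  _ = d * (‖θ‖ * ‖v‖) := by simp [mul_comm]

lemma continuous_dot_right (θ : Fin d → ℝ) : Continuous fun z : Fin d → ℝ => dot θ z := by
  unfold dot
  exact continuous_finset_sum _ fun i _ => continuous_const.mul (continuous_apply i)

lemma continuous_dot_left (z : Fin d → ℝ) : Continuous fun θ : Fin d → ℝ => dot θ z := by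
  unfold dot
  exact continuous_finset_sum _ fun i _ => (continuous_apply i).mul continuous_const

lemma measurable_expdot (θ x : Fin d → ℝ) :
    Measurable fun z : Fin d → ℝ => ENNReal.ofReal (Real.exp (dot θ z - dot θ x)) :=
  (ENNReal.continuous_ofReal.comp (Real.continuous_exp.comp
    ((continuous_dot_right θ).sub continuous_const))).measurable

lemma measurable_expdot' (θ : Fin d → ℝ) :
    Measurable fun z : Fin d → ℝ => ENNReal.ofReal (Real.exp (dot θ z)) :=
  (ENNReal.continuous_ofReal.comp (Real.continuous_exp.comp
    (continuous_dot_right θ))).measurable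

lemma measurable_sqdot (θ x : Fin d → ℝ) :
    Measurable fun z : Fin d → ℝ =>
      ENNReal.ofReal ((Real.exp (dot θ z - dot θ x) - 1) ^ 2) :=
  (ENNReal.continuous_ofReal.comp (((Real.continuous_exp.comp
    ((continuous_dot_right θ).sub continuous_const)).sub continuous_const).pow 2)).measurable

noncomputable def J (μ : Measure (Fin d → ℝ)) (x θ : Fin d → ℝ) : ℝ≥0∞ :=
  ∫⁻ z, ENNReal.ofReal (Real.exp (dot θ z - dot θ x)) ∂μ

/-- Hölder scaling: `J (t • θ) ≤ (J θ) ^ t` for `t ∈ (0, 1]`. -/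
lemma J_smul_le (μ : Measure (Fin d → ℝ)) [IsProbabilityMeasure μ] (x θ : Fin d → ℝ)
    {t : ℝ} (ht0 : 0 < t) (ht1 : t ≤ 1) : J μ x (t • θ) ≤ (J μ x θ) ^ t := by
  rcases eq_or_lt_of_le ht1 with rfl | ht1
  · simp [J]
  have hconj : (1/t).HolderConjugate (1/(1-t)) := by
    rw [Real.holderConjugate_iff]
    constructor
    · rw [lt_div_iff₀ ht0]; linarith
    · rw [one_div, one_div, inv_inv, inv_inv]; ring
  have hf : AEMeasurable (fun z => (ENNReal.ofReal (Real.exp (dot θ z - dot θ x))) ^ t) μ :=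
    ((measurable_expdot θ x).pow_const _).aemeasurable
  have hg : AEMeasurable (fun _ : Fin d → ℝ => (1 : ℝ≥0∞)) μ := aemeasurable_const
  have H := ENNReal.lintegral_mul_le_Lp_mul_Lq μ hconj hf hg
  have hL : ∫⁻ z, (((fun z => (ENNReal.ofReal (Real.exp (dot θ z - dot θ x))) ^ t) :
      (Fin d → ℝ) → ℝ≥0∞) * ((fun _ => (1:ℝ≥0∞)) : (Fin d → ℝ) → ℝ≥0∞)) z ∂μ
      = J μ x (t • θ) := by
    refine lintegral_congr fun z => ?_
    show (ENNReal.ofReal (Real.exp (dot θ z - dot θ x))) ^ t * 1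
        = ENNReal.ofReal (Real.exp (dot (t • θ) z - dot (t • θ) x))
    rw [mul_one, dot_smul_left, dot_smul_left, ← mul_sub, mul_comm, Real.exp_mul,
      ENNReal.ofReal_rpow_of_pos (Real.exp_pos _)]
  have hR1 : ∫⁻ z, ((ENNReal.ofReal (Real.exp (dot θ z - dot θ x))) ^ t) ^ (1/t) ∂μ
      = J μ x θ := by
    refine lintegral_congr fun z => ?_
    rw [← ENNReal.rpow_mul, mul_one_div_cancel ht0.ne', ENNReal.rpow_one]
  have hR2 : (∫⁻ _z : Fin d → ℝ, ((1:ℝ≥0∞)) ^ (1/(1-t)) ∂μ) ^ (1/(1/(1-t))) = 1 := by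
    simp
  rw [hL] at H
  calc J μ x (t • θ) ≤ (∫⁻ z, ((ENNReal.ofReal (Real.exp (dot θ z - dot θ x))) ^ t) ^ (1/t) ∂μ)
        ^ (1/(1/t)) * (∫⁻ _z : Fin d → ℝ, ((1:ℝ≥0∞)) ^ (1/(1-t)) ∂μ) ^ (1/(1/(1-t))) := H
    _ = (J μ x θ) ^ t := by rw [hR1, hR2, mul_one, one_div_one_div]

/-- The machine: a sequence with bounded `J`, exploding norm and converging directions
forces the limit direction to be a.s. degenerate. -/
lemma machine (μ : Measure (Fin d → ℝ)) [IsProbabilityMeasure μ] (x : Fin d → ℝ)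
    (hstar : ∀ θ, 1 ≤ J μ x θ)
    (θ' : ℕ → (Fin d → ℝ))
    (hJb : ∀ n, J μ x (θ' n) ≤ ENNReal.ofReal (Real.exp 1))
    (hr : Tendsto (fun n => ‖θ' n‖) atTop atTop)
    (u : Fin d → ℝ)
    (hu : Tendsto (fun n => (‖θ' n‖)⁻¹ • θ' n) atTop (𝓝 u)) :
    ∀ᵐ z ∂μ, dot u z = dot u x := by
  set s : ℕ → (Fin d → ℝ) := fun n => (‖θ' n‖)⁻¹ • θ' n with hs
  set A : ℕ → ℝ≥0∞ := fun n =>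
    ∫⁻ z, ENNReal.ofReal ((Real.exp (dot (s n) z - dot (s n) x) - 1) ^ 2) ∂μ with hA
  have hid : ∀ n, A n + 2 * J μ x (s n) = J μ x ((2:ℝ) • s n) + 1 := by
    intro n
    have hpt : ∀ z, ENNReal.ofReal ((Real.exp (dot (s n) z - dot (s n) x) - 1) ^ 2)
        + 2 * ENNReal.ofReal (Real.exp (dot (s n) z - dot (s n) x))
        = ENNReal.ofReal (Real.exp (dot ((2:ℝ) • s n) z - dot ((2:ℝ) • s n) x)) + 1 := by
      intro z
      set a := dot (s n) z - dot (s n) x with ha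
      have h2a : dot ((2:ℝ) • s n) z - dot ((2:ℝ) • s n) x = a + a := by
        simp only [ha, dot_smul_left]; ring
      rw [h2a, Real.exp_add]
      have h1 : (2:ℝ≥0∞) * ENNReal.ofReal (Real.exp a) = ENNReal.ofReal (2 * Real.exp a) := by
        rw [ENNReal.ofReal_mul (by norm_num)]; norm_num
      rw [h1, ← ENNReal.ofReal_add (by positivity) (by positivity)]
      have : (Real.exp a - 1) ^ 2 + 2 * Real.exp a = Real.exp a * Real.exp a + 1 := by ring
      rw [this, ENNReal.ofReal_add (by positivity) (by norm_num), ENNReal.ofReal_one]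
    calc A n + 2 * J μ x (s n)
        = ∫⁻ z, (ENNReal.ofReal ((Real.exp (dot (s n) z - dot (s n) x) - 1) ^ 2)
            + 2 * ENNReal.ofReal (Real.exp (dot (s n) z - dot (s n) x))) ∂μ := by
          rw [lintegral_add_left (measurable_sqdot _ _),
            lintegral_const_mul 2 (measurable_expdot _ _)]
          rfl
      _ = ∫⁻ z, (ENNReal.ofReal (Real.exp (dot ((2:ℝ) • s n) z - dot ((2:ℝ) • s n) x)) + 1) ∂μ :=
          lintegral_congr fun z => hpt z
      _ = J μ x ((2:ℝ) • s n) + 1 := by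
          rw [lintegral_add_right _ measurable_const]; simp [J]
  have hev : ∀ᶠ n in atTop, A n ≤ ENNReal.ofReal (Real.exp (2 / ‖θ' n‖) - 1) := by
    filter_upwards [hr.eventually_ge_atTop 2] with n hn2
    have hrpos : (0:ℝ) < ‖θ' n‖ := lt_of_lt_of_le (by norm_num) hn2
    have h2s : (2:ℝ) • s n = (2 / ‖θ' n‖) • θ' n := by
      simp only [hs, smul_smul, div_eq_mul_inv]
    have hJ2 : J μ x ((2:ℝ) • s n) ≤ ENNReal.ofReal (Real.exp (2 / ‖θ' n‖)) := by
      rw [h2s]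
      calc J μ x ((2 / ‖θ' n‖) • θ' n) ≤ (J μ x (θ' n)) ^ (2 / ‖θ' n‖) :=
            J_smul_le μ x (θ' n) (by positivity) (by rw [div_le_one hrpos]; exact hn2)
        _ ≤ (ENNReal.ofReal (Real.exp 1)) ^ (2 / ‖θ' n‖) :=
            ENNReal.rpow_le_rpow (hJb n) (by positivity)
        _ = ENNReal.ofReal (Real.exp (2 / ‖θ' n‖)) := by
            rw [ENNReal.ofReal_rpow_of_pos (Real.exp_pos _), Real.exp_one_rpow]
    have hA2 : A n + 2 ≤ ENNReal.ofReal (Real.exp (2 / ‖θ' n‖)) + 1 := by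
      calc A n + 2 ≤ A n + 2 * J μ x (s n) := by
            gcongr
            exact le_mul_of_one_le_right (by norm_num) (hstar (s n))
        _ = J μ x ((2:ℝ) • s n) + 1 := hid n
        _ ≤ ENNReal.ofReal (Real.exp (2 / ‖θ' n‖)) + 1 := by gcongr
    have hsub : ENNReal.ofReal (Real.exp (2 / ‖θ' n‖))
        = ENNReal.ofReal (Real.exp (2 / ‖θ' n‖) - 1) + 1 := by
      rw [← ENNReal.ofReal_one, ← ENNReal.ofReal_add (by
        have : (1:ℝ) ≤ Real.exp (2 / ‖θ' n‖) := Real.one_le_exp (by positivity)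
        linarith) (by norm_num)]
      congr 1; ring
    rw [hsub] at hA2
    have htwo : (2:ℝ≥0∞) = 1 + 1 := one_add_one_eq_two.symm
    rw [htwo, ← add_assoc] at hA2
    exact (ENNReal.add_le_add_iff_right ENNReal.one_ne_top).mp
      ((ENNReal.add_le_add_iff_right ENNReal.one_ne_top).mp hA2)
  have hbound : Tendsto (fun n => ENNReal.ofReal (Real.exp (2 / ‖θ' n‖) - 1)) atTop (𝓝 0) := by
    have h1 : Tendsto (fun n => 2 / ‖θ' n‖) atTop (𝓝 0) := tendsto_const_nhds.div_atTop hr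
    have h2 : Tendsto (fun n => Real.exp (2 / ‖θ' n‖) - 1) atTop (𝓝 0) := by
      have h3 := (Real.continuous_exp.tendsto 0).comp h1
      rw [Real.exp_zero] at h3
      have h4 : Tendsto (fun _ : ℕ => (1:ℝ)) atTop (𝓝 1) := tendsto_const_nhds
      simpa using h3.sub h4
    have := (ENNReal.continuous_ofReal.tendsto 0).comp h2
    simpa [Function.comp_def] using this
  have hA0 : Tendsto A atTop (𝓝 0) :=
    tendsto_of_tendsto_of_tendsto_of_le_of_le' tendsto_const_nhds hbound
      (Eventually.of_forall fun n => zero_le) hev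
  have hptlim : ∀ z, Tendsto (fun n =>
      ENNReal.ofReal ((Real.exp (dot (s n) z - dot (s n) x) - 1) ^ 2)) atTop
      (𝓝 (ENNReal.ofReal ((Real.exp (dot u z - dot u x) - 1) ^ 2))) := by
    intro z
    have hcont : Continuous fun θ : Fin d → ℝ =>
        ENNReal.ofReal ((Real.exp (dot θ z - dot θ x) - 1) ^ 2) :=
      ENNReal.continuous_ofReal.comp (((Real.continuous_exp.comp
        ((continuous_dot_left z).sub (continuous_dot_left x))).sub continuous_const).pow 2)
    exact (hcont.tendsto u).comp hu
  have hFatou : ∫⁻ z, ENNReal.ofReal ((Real.exp (dot u z - dot u x) - 1) ^ 2) ∂μ = 0 := by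
    have hle : ∫⁻ z, ENNReal.ofReal ((Real.exp (dot u z - dot u x) - 1) ^ 2) ∂μ
        ≤ liminf A atTop := by
      have := lintegral_liminf_le (μ := μ) (u := atTop)
        (f := fun n z => ENNReal.ofReal ((Real.exp (dot (s n) z - dot (s n) x) - 1) ^ 2))
        (fun n => measurable_sqdot _ _)
      refine le_trans (le_of_eq ?_) this
      exact lintegral_congr fun z => ((hptlim z).liminf_eq).symm
    rw [hA0.liminf_eq] at hle
    exact le_antisymm (by simpa using hle) zero_le
  have := (lintegral_eq_zero_iff (measurable_sqdot u x)).mp hFatou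
  filter_upwards [this] with z hz
  have h0 : (Real.exp (dot u z - dot u x) - 1) ^ 2 ≤ 0 := by
    simpa [ENNReal.ofReal_eq_zero] using hz
  have h1 : Real.exp (dot u z - dot u x) - 1 = 0 := by
    have := sq_nonneg (Real.exp (dot u z - dot u x) - 1)
    nlinarith [this]
  have h2 : dot u z - dot u x = 0 := by
    have h5 : Real.exp (dot u z - dot u x) = Real.exp 0 := by rw [Real.exp_zero]; linarith
    exact Real.exp_eq_exp.mp h5
  linarith

end CramerAux

/-- if the Legendre conjugate `ψ` of the log-Laplace transform of a
probability distribution on `ℝ^d` vanishes at `x`, then `x` lies in the relative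
interior of the domain of `ψ`. -/
theorem mem_intrinsicInterior_domain_of_conjugate_eq_zero
    (d : ℕ) (μ : Measure (Fin d → ℝ)) [IsProbabilityMeasure μ]
    (L : (Fin d → ℝ) → ℝ≥0∞)
    (hL : ∀ θ, L θ = ∫⁻ x, ENNReal.ofReal (Real.exp (∑ i, θ i * x i)) ∂μ)
    (φ : (Fin d → ℝ) → EReal)
    (hφ : ∀ θ, φ θ = if L θ = ⊤ then (⊤ : EReal) else ((Real.log (L θ).toReal : ℝ) : EReal))
    (ψ : (Fin d → ℝ) → EReal)
    (hψ : ∀ x, ψ x = ⨆ θ ∈ {θ | L θ ≠ ⊤}, (((∑ i, θ i * x i : ℝ)) : EReal) - φ θ)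
    (x : Fin d → ℝ) (hx : ψ x = 0) :
    x ∈ intrinsicInterior ℝ {y | ψ y ≠ ⊤} := by
  classical
  open CramerAux in
  -- rewrite sums as dot products
  have hds : ∀ θ z : Fin d → ℝ, (∑ i, θ i * z i) = dot θ z := fun _ _ => rfl
  simp only [hds] at hL hψ
  -- bridge facts
  have hLpos : ∀ θ, 0 < L θ := by
    intro θ
    rw [hL θ]
    rw [lintegral_pos_iff_support (measurable_expdot' θ)]
    have hsupp : Function.support (fun z : Fin d → ℝ =>
        ENNReal.ofReal (Real.exp (dot θ z))) = Set.univ := by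
      ext z
      simp [Function.mem_support, ENNReal.ofReal_eq_zero, not_le, Real.exp_pos]
    rw [hsupp, measure_univ]
    norm_num
  have hJL : ∀ θ, J μ x θ = ENNReal.ofReal (Real.exp (- dot θ x)) * L θ := by
    intro θ
    rw [hL θ, ← lintegral_const_mul _ (measurable_expdot' θ)]
    refine lintegral_congr fun z => ?_
    rw [← ENNReal.ofReal_mul (Real.exp_nonneg _), ← Real.exp_add]
    congr 1
    ring
  have hJtop : ∀ θ, J μ x θ = ⊤ ↔ L θ = ⊤ := by
    intro θ
    constructor
    · intro h
      by_contra hL'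
      exact (ENNReal.mul_ne_top ENNReal.ofReal_ne_top hL') (hJL θ ▸ h)
    · intro h
      rw [hJL, h, ENNReal.mul_top]
      simp [ENNReal.ofReal_eq_zero, not_le, Real.exp_pos]
  have hle0 : ∀ θ, L θ ≠ ⊤ → dot θ x ≤ Real.log (L θ).toReal := by
    intro θ hθ
    have h1 : ((dot θ x : ℝ) : EReal) - φ θ ≤ ψ x := by
      rw [hψ x]
      exact le_iSup₂ (f := fun θ _ => ((dot θ x : ℝ) : EReal) - φ θ) θ hθ
    rw [hx, hφ θ, if_neg hθ, ← EReal.coe_sub] at h1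
    have := EReal.coe_nonpos.mp h1
    linarith
  have hstar : ∀ θ, 1 ≤ J μ x θ := by
    intro θ
    by_cases hθ : L θ = ⊤
    · rw [(hJtop θ).mpr hθ]; exact le_top
    · have hLt : ENNReal.ofReal (Real.exp (dot θ x)) ≤ L θ := by
        have h2 : Real.exp (dot θ x) ≤ (L θ).toReal := by
          have h3 := hle0 θ hθ
          have h4 : 0 < (L θ).toReal := ENNReal.toReal_pos (hLpos θ).ne' hθ
          calc Real.exp (dot θ x) ≤ Real.exp (Real.log (L θ).toReal) := Real.exp_le_exp.mpr h3
            _ = (L θ).toReal := Real.exp_log h4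
        calc ENNReal.ofReal (Real.exp (dot θ x)) ≤ ENNReal.ofReal (L θ).toReal :=
              ENNReal.ofReal_le_ofReal h2
          _ = L θ := ENNReal.ofReal_toReal hθ
      calc (1:ℝ≥0∞) = ENNReal.ofReal (Real.exp (- dot θ x)) *
            ENNReal.ofReal (Real.exp (dot θ x)) := by
            rw [← ENNReal.ofReal_mul (Real.exp_nonneg _), ← Real.exp_add]
            simp
        _ ≤ ENNReal.ofReal (Real.exp (- dot θ x)) * L θ := by gcongr
        _ = J μ x θ := (hJL θ).symm
  have hJne : ∀ θ, L θ ≠ ⊤ → (1:ℝ) ≤ (J μ x θ).toReal := by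
    intro θ hθ
    have h1 : J μ x θ ≠ ⊤ := fun h => hθ ((hJtop θ).mp h)
    have := ENNReal.toReal_mono h1 (hstar θ)
    simpa using this
  have htoReal : ∀ θ, L θ ≠ ⊤ →
      Real.log (L θ).toReal = dot θ x + Real.log (J μ x θ).toReal := by
    intro θ hθ
    have h1 : (J μ x θ).toReal = Real.exp (- dot θ x) * (L θ).toReal := by
      rw [hJL θ, ENNReal.toReal_mul, ENNReal.toReal_ofReal (Real.exp_nonneg _)]
    have h4 : 0 < (L θ).toReal := ENNReal.toReal_pos (hLpos θ).ne' hθ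
    rw [h1, Real.log_mul (Real.exp_ne_zero _) h4.ne', Real.log_exp]
    ring
  -- extraction from ψ p = ⊤
  have hpsitop : ∀ p : Fin d → ℝ, ψ p = ⊤ → ∀ N : ℝ, ∃ θ, L θ ≠ ⊤ ∧
      N ≤ dot θ p - dot θ x - Real.log (J μ x θ).toReal := by
    intro p hp N
    by_contra hcon
    push_neg at hcon
    have hle : ψ p ≤ (N : EReal) := by
      rw [hψ p]
      refine iSup₂_le fun θ hθ => ?_
      rw [hφ θ, if_neg hθ, ← EReal.coe_sub]
      refine EReal.coe_le_coe_iff.mpr ?_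
      have h5 := hcon θ hθ
      have h6 := htoReal θ hθ
      show dot θ p - Real.log (L θ).toReal ≤ N
      rw [h6]
      linarith
    rw [hp] at hle
    exact absurd hle (by simp)
  -- criterion for ψ w = ⊤
  have hpsieqtop : ∀ w : Fin d → ℝ,
      (∀ N : ℝ, ∃ θ, L θ ≠ ⊤ ∧ (N : EReal) ≤ ((dot θ w : ℝ) : EReal) - φ θ) →
      ψ w = ⊤ := by
    intro w hw
    rw [hψ w]
    refine eq_top_iff.mpr (le_of_forall_lt fun c hc => ?_)
    obtain ⟨N, hcN, -⟩ := EReal.exists_between_coe_real hc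
    obtain ⟨θ, hθ, hNθ⟩ := hw N
    calc c < (N : EReal) := hcN
      _ ≤ ((dot θ w : ℝ) : EReal) - φ θ := hNθ
      _ ≤ ⨆ θ ∈ {θ | L θ ≠ ⊤}, ((dot θ w : ℝ) : EReal) - φ θ :=
          le_iSup₂ (f := fun θ _ => ((dot θ w : ℝ) : EReal) - φ θ) θ hθ
  -- the degenerate directions
  let ι : EuclideanSpace ℝ (Fin d) ≃L[ℝ] (Fin d → ℝ) :=
    PiLp.continuousLinearEquiv 2 ℝ (fun _ : Fin d => ℝ)
  let T : Submodule ℝ (EuclideanSpace ℝ (Fin d)) :=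
    { carrier := {v | ∀ᵐ z ∂μ, dot (ι v) z = dot (ι v) x}
      add_mem' := by
        intro a b ha hb
        have ha' : ∀ᵐ z ∂μ, dot (ι a) z = dot (ι a) x := ha
        have hb' : ∀ᵐ z ∂μ, dot (ι b) z = dot (ι b) x := hb
        show ∀ᵐ z ∂μ, dot (ι (a + b)) z = dot (ι (a + b)) x
        filter_upwards [ha', hb'] with z h1 h2
        rw [map_add, dot_add_left, dot_add_left, h1, h2]
      zero_mem' := by
        show ∀ᵐ z ∂μ, dot (ι 0) z = dot (ι 0) x
        refine Filter.Eventually.of_forall fun z => ?_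
        rw [map_zero, dot_zero_left, dot_zero_left]
      smul_mem' := by
        intro c a ha
        have ha' : ∀ᵐ z ∂μ, dot (ι a) z = dot (ι a) x := ha
        show ∀ᵐ z ∂μ, dot (ι (c • a)) z = dot (ι (c • a)) x
        filter_upwards [ha'] with z h1
        rw [_root_.map_smul, dot_smul_left, dot_smul_left, h1] }
  have hTmem : ∀ v : EuclideanSpace ℝ (Fin d),
      v ∈ T ↔ ∀ᵐ z ∂μ, dot (ι v) z = dot (ι v) x := fun v => Iff.rfl
  -- a degenerate direction forces the whole domain into a hyperplane
  have hT : ∀ v ∈ T, ∀ w : Fin d → ℝ, ψ w ≠ ⊤ → dot (ι v) w = dot (ι v) x := by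
    intro v hv w hw
    by_contra hne
    apply hw
    apply hpsieqtop w
    intro N
    set u : Fin d → ℝ := ι v with hu
    set c : ℝ := dot u w - dot u x with hc
    have hc0 : c ≠ 0 := fun h => hne (by rw [hc] at h; linarith [sub_eq_zero.mp h])
    have hLs : ∀ s : ℝ, L (s • u) = ENNReal.ofReal (Real.exp (s * dot u x)) := by
      intro s
      rw [hL]
      have hcong : ∀ᵐ z ∂μ, ENNReal.ofReal (Real.exp (dot (s • u) z))
          = ENNReal.ofReal (Real.exp (s * dot u x)) := by
        filter_upwards [(hTmem v).mp hv] with z hz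
        rw [dot_smul_left, hz]
      rw [lintegral_congr_ae hcong, lintegral_const, measure_univ, mul_one]
    set s : ℝ := N / c with hsdef
    refine ⟨s • u, ?_, ?_⟩
    · rw [hLs s]; exact ENNReal.ofReal_ne_top
    · have hLtop : L (s • u) ≠ ⊤ := by rw [hLs s]; exact ENNReal.ofReal_ne_top
      rw [hφ (s • u), if_neg hLtop, hLs s,
        ENNReal.toReal_ofReal (Real.exp_nonneg _), Real.log_exp, ← EReal.coe_sub]
      refine EReal.coe_le_coe_iff.mpr ?_
      have : dot (s • u) w - s * dot u x = s * c := by rw [dot_smul_left, hc]; ring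
      rw [this, hsdef, div_mul_cancel₀ N hc0]
  -- main claim: a relative neighbourhood of x inside the hyperplane section is in the domain
  have main : ∃ δ > 0, ∀ z : Fin d → ℝ, (∀ v ∈ T, dot (ι v) z = dot (ι v) x) →
      ‖z - x‖ < δ → ψ z ≠ ⊤ := by
    by_contra hcon
    push_neg at hcon
    have key : ∀ n : ℕ, ∃ m : EuclideanSpace ℝ (Fin d), m ∈ Tᗮ ∧
        J μ x (ι m) ≤ ENNReal.ofReal (Real.exp 1) ∧
        ∃ z : Fin d → ℝ, ‖z - x‖ < 1/(n+1) ∧ dot (ι m) z - dot (ι m) x = 1 := by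
      intro n
      obtain ⟨z, hzM, hzd, hztop⟩ := hcon (1/(n+1)) (by positivity)
      obtain ⟨θ, hθ, hθval⟩ := hpsitop z hztop ((n:ℝ)+1)
      set b := Real.log (J μ x θ).toReal with hbdef
      set c := dot θ z - dot θ x with hcdef
      have hb0 : 0 ≤ b := Real.log_nonneg (hJne θ hθ)
      have hn1 : (1:ℝ) ≤ (n:ℝ)+1 := by
        have := Nat.cast_nonneg (α := ℝ) n
        linarith
      have hc1 : (1:ℝ) ≤ c := by linarith
      have hcpos : (0:ℝ) < c := lt_of_lt_of_le one_pos hc1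
      have hbc : b ≤ c := by linarith
      have hJθ : J μ x θ = ENNReal.ofReal (Real.exp b) := by
        rw [hbdef, Real.exp_log (lt_of_lt_of_le one_pos (hJne θ hθ))]
        exact (ENNReal.ofReal_toReal (fun h => hθ ((hJtop θ).mp h))).symm
      have hJb : J μ x (c⁻¹ • θ) ≤ ENNReal.ofReal (Real.exp 1) := by
        calc J μ x (c⁻¹ • θ) ≤ (J μ x θ) ^ (c⁻¹) :=
              J_smul_le μ x θ (inv_pos.mpr hcpos) (inv_le_one_of_one_le₀ hc1)
          _ = ENNReal.ofReal (Real.exp b) ^ (c⁻¹) := by rw [hJθ]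
          _ = ENNReal.ofReal (Real.exp (b * c⁻¹)) := by
              rw [ENNReal.ofReal_rpow_of_pos (Real.exp_pos _), ← Real.exp_mul]
          _ ≤ ENNReal.ofReal (Real.exp 1) := by
              apply ENNReal.ofReal_le_ofReal
              apply Real.exp_le_exp.mpr
              rw [← div_eq_mul_inv, div_le_one hcpos]
              exact hbc
      obtain ⟨q, hq, m, hm, hqm⟩ := Submodule.exists_add_mem_mem_orthogonal (K := T) (ι.symm (c⁻¹ • θ))
      have hsplit : (c⁻¹ • θ) = ι q + ι m := by
        rw [← map_add, ← hqm, ι.apply_symm_apply]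
      have hqae : ∀ᵐ w ∂μ, dot (ι q) w = dot (ι q) x := hq
      refine ⟨m, hm, ?_, z, hzd, ?_⟩
      · have hJeq : J μ x (ι m) = J μ x (c⁻¹ • θ) := by
          apply lintegral_congr_ae
          filter_upwards [hqae] with w hw
          congr 1
          rw [hsplit, dot_add_left, dot_add_left, hw]
          ring
        rw [hJeq]
        exact hJb
      · have hqz : dot (ι q) z = dot (ι q) x := hzM q hq
        have e1 : dot (ι m) z = dot (c⁻¹ • θ) z - dot (ι q) z := by
          rw [hsplit, dot_add_left]; ring
        have e2 : dot (ι m) x = dot (c⁻¹ • θ) x - dot (ι q) x := by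
          rw [hsplit, dot_add_left]; ring
        rw [e1, e2, hqz, dot_smul_left, dot_smul_left]
        have e3 : c⁻¹ * dot θ z - dot (ι q) x - (c⁻¹ * dot θ x - dot (ι q) x)
            = c⁻¹ * c := by rw [hcdef]; ring
        rw [e3]
        exact inv_mul_cancel₀ hcpos.ne'
    choose m hmT hmJ z hzδ hz1 using key
    -- norm lower bounds
    have hd1 : ∀ n : ℕ, (1:ℝ) ≤ d * (‖ι (m n)‖ * ‖z n - x‖) := by
      intro n
      have e : dot (ι (m n)) (z n - x) = 1 := by rw [dot_sub_right, hz1 n]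
      calc (1:ℝ) = dot (ι (m n)) (z n - x) := e.symm
        _ ≤ d * (‖ι (m n)‖ * ‖z n - x‖) := dot_abs_le _ _
    have hdpos : (0:ℝ) < d := by
      rcases Nat.eq_zero_or_pos d with h | h
      · exfalso
        have h1 := hd1 0
        have h2 : ((d:ℕ):ℝ) = 0 := by rw [h]; norm_num
        rw [h2] at h1
        norm_num at h1
      · exact_mod_cast h
    have hrlb : ∀ n : ℕ, ((n:ℝ)+1)/d ≤ ‖ι (m n)‖ := by
      intro n
      have h1 := hd1 n
      have h2 : ‖z n - x‖ < 1/((n:ℝ)+1) := hzδ n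
      have h3 : (0:ℝ) ≤ ‖ι (m n)‖ := norm_nonneg _
      have h4 : (0:ℝ) ≤ ‖z n - x‖ := norm_nonneg _
      have hn1 : (0:ℝ) < (n:ℝ)+1 := by positivity
      rw [div_le_iff₀ hdpos]
      by_contra hlt
      push_neg at hlt
      have h5 : (d:ℝ) * (‖ι (m n)‖ * ‖z n - x‖) < 1 := by
        have e1 : (d:ℝ) * (‖ι (m n)‖ * ‖z n - x‖) = (‖ι (m n)‖ * d) * ‖z n - x‖ := by ring
        rw [e1]
        calc (‖ι (m n)‖ * (d:ℝ)) * ‖z n - x‖ ≤ ((n:ℝ)+1) * ‖z n - x‖ :=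
              mul_le_mul_of_nonneg_right hlt.le h4
          _ < ((n:ℝ)+1) * (1/((n:ℝ)+1)) := mul_lt_mul_of_pos_left h2 hn1
          _ = 1 := mul_one_div_cancel hn1.ne'
      linarith [h1]
    have hrpos : ∀ n : ℕ, (0:ℝ) < ‖ι (m n)‖ := by
      intro n
      refine lt_of_lt_of_le ?_ (hrlb n)
      positivity
    have hrtop : Filter.Tendsto (fun n => ‖ι (m n)‖) Filter.atTop Filter.atTop := by
      refine Filter.tendsto_atTop_mono hrlb ?_
      apply Filter.Tendsto.atTop_div_const hdpos
      exact Filter.tendsto_atTop_add_const_right _ 1 tendsto_natCast_atTop_atTop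
    -- compactness: converging subsequence of directions
    set w : ℕ → (Fin d → ℝ) := fun n => (‖ι (m n)‖)⁻¹ • ι (m n) with hwdef
    have hw1 : ∀ n, w n ∈ Metric.sphere (0 : Fin d → ℝ) 1 := by
      intro n
      have hr := hrpos n
      simp [hwdef, norm_smul, abs_of_pos (inv_pos.mpr hr), inv_mul_cancel₀ hr.ne']
    obtain ⟨u, hu_mem, κ, hκ, hκu⟩ :=
      (isCompact_sphere (0 : Fin d → ℝ) 1).tendsto_subseq hw1
    have hmach := machine μ x hstar (fun k => ι (m (κ k))) (fun k => hmJ (κ k))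
        (hrtop.comp hκ.tendsto_atTop) u hκu
    have huT : ι.symm u ∈ T := by
      show ∀ᵐ zz ∂μ, dot (ι (ι.symm u)) zz = dot (ι (ι.symm u)) x
      simpa [ι.apply_symm_apply] using hmach
    have huTperp : ι.symm u ∈ Tᗮ := by
      have hvmem : ∀ k, (‖ι (m (κ k))‖)⁻¹ • m (κ k) ∈ Tᗮ :=
        fun k => Submodule.smul_mem _ _ (hmT _)
      have hvtend : Filter.Tendsto (fun k => (‖ι (m (κ k))‖)⁻¹ • m (κ k))
          Filter.atTop (nhds (ι.symm u)) := by
        have h1 := (ι.symm.continuous.tendsto u).comp hκu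
        have h2 : (fun k => ι.symm (w (κ k))) = fun k => (‖ι (m (κ k))‖)⁻¹ • m (κ k) := by
          funext k
          rw [hwdef]
          simp only []
          rw [_root_.map_smul, ι.symm_apply_apply]
        rw [← h2]
        exact h1
      exact (Submodule.isClosed_orthogonal T).mem_of_tendsto hvtend
        (Filter.Eventually.of_forall hvmem)
    have hzero : ι.symm u = 0 := by
      have h := (Submodule.mem_orthogonal T (ι.symm u)).mp huTperp
      exact inner_self_eq_zero.mp (h _ huT)
    have hu0 : u = 0 := by
      rw [← ι.apply_symm_apply u, hzero, map_zero]
    rw [hu0] at hu_mem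
    simp at hu_mem
  -- final assembly
  obtain ⟨δ, hδ, hball⟩ := main
  have hxS : x ∈ {y | ψ y ≠ ⊤} := by
    show ψ x ≠ ⊤
    rw [hx]
    exact fun h => by simpa using h
  -- the affine subspace cut out by the degenerate directions
  let Maff : AffineSubspace ℝ (Fin d → ℝ) :=
    { carrier := {zz | ∀ v ∈ T, dot (ι v) zz = dot (ι v) x}
      smul_vsub_vadd_mem' := by
        intro c p1 p2 p3 h1 h2 h3 v hv
        have e : c • (p1 -ᵥ p2) +ᵥ p3 = c • (p1 - p2) + p3 := rfl
        rw [e, dot_smul_add_right, dot_sub_right, h1 v hv, h2 v hv, h3 v hv]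
        ring }
  have hSM : {y | ψ y ≠ ⊤} ⊆ (Maff : Set (Fin d → ℝ)) := by
    intro w hw v hv
    exact hT v hv w hw
  have hspan : affineSpan ℝ {y | ψ y ≠ ⊤} ≤ Maff := affineSpan_le.mpr hSM
  rw [mem_intrinsicInterior]
  refine ⟨⟨x, subset_affineSpan ℝ _ hxS⟩, ?_, rfl⟩
  rw [mem_interior]
  refine ⟨Subtype.val ⁻¹' Metric.ball x δ, ?_,
    continuous_subtype_val.isOpen_preimage _ Metric.isOpen_ball, ?_⟩
  · rintro ⟨zz, hzspan⟩ hzball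
    have hzM : ∀ v ∈ T, dot (ι v) zz = dot (ι v) x := hspan hzspan
    have hdist : ‖zz - x‖ < δ := by
      have : dist zz x < δ := hzball
      rwa [dist_eq_norm] at this
    exact hball zz hzM hdist
  · show dist x x < δ
    simpa using hδ
end

section
/- Let F be an aperiodic probability distribution on Z^d with log-Laplace transform φ. Then the interior of the convex hull of the support of F is non-empty, and for any compact set K contained in the interior of dom(φ), the determinant of the covariance matrix Σ_θ of the tilted law P_θ is bounded away from zero uniformly in θ ∈ K: inf_{θ∈K} |Σ_θ| > 0. -/
open scoped ENNReal

lemma aux_summable_of_ne_top {α : Type*} {f : α → ℝ} (hf : ∀ a, 0 ≤ f a)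
    (h : (∑' a, ENNReal.ofReal (f a)) ≠ ⊤) : Summable f := by
  have h2 : Summable (fun a => (f a).toNNReal) := by
    rw [← ENNReal.tsum_coe_ne_top_iff_summable]
    simpa [ENNReal.ofReal] using h
  have := (NNReal.summable_coe).2 h2
  refine this.congr fun a => ?_
  simp [Real.coe_toNNReal _ (hf a)]


lemma aux_exists_pos {d : ℕ} {F : (Fin d → ℤ) → ℝ} (hF0 : ∀ y, 0 ≤ F y)
    (hF1 : ∑' y, F y = 1) : ∃ x, 0 < F x := by
  by_contra h
  push_neg at h
  have : ∀ y, F y = 0 := fun y => le_antisymm (h y) (hF0 y)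
  simp [this] at hF1

lemma aux_part1 {d : ℕ} (F : (Fin d → ℤ) → ℝ)
    (hF0 : ∀ y, 0 ≤ F y) (hF1 : ∑' y, F y = 1)
    (haper : AddSubgroup.closure
        {z : Fin d → ℤ | ∃ u v, 0 < F u ∧ 0 < F v ∧ z = u - v} = ⊤) :
    (interior (convexHull ℝ
        ((fun x : Fin d → ℤ => fun i => (x i : ℝ)) '' {x | 0 < F x}))).Nonempty := by
  classical
  set c : (Fin d → ℤ) → (Fin d → ℝ) := fun x => fun i => (x i : ℝ) with hc
  set E : Set (Fin d → ℝ) := c '' {x | 0 < F x} with hE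
  obtain ⟨x₀, hx₀⟩ := aux_exists_pos hF0 hF1
  have hne : E.Nonempty := ⟨c x₀, x₀, hx₀, rfl⟩
  have hadd : ∀ a b : Fin d → ℤ, c (a + b) = c a + c b := by
    intro a b; funext i; simp [hc]
  have hneg : ∀ a : Fin d → ℤ, c (-a) = - c a := by
    intro a; funext i; simp [hc]
  have hsub : ∀ a b : Fin d → ℤ, c (a - b) = c a - c b := by
    intro a b; funext i; simp [hc]
  rw [(convex_convexHull ℝ E).interior_nonempty_iff_affineSpan_eq_top, affineSpan_convexHull,
    AffineSubspace.affineSpan_eq_top_iff_vectorSpan_eq_top_of_nonempty ℝ (Fin d → ℝ) (Fin d → ℝ) hne]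
  have hczmem : ∀ z : Fin d → ℤ, c z ∈ vectorSpan ℝ E := by
    let H : AddSubgroup (Fin d → ℤ) :=
      { carrier := {z | c z ∈ vectorSpan ℝ E}
        zero_mem' := by
          have : c 0 = 0 := by funext i; simp [hc]
          simp only [Set.mem_setOf_eq, this]
          exact Submodule.zero_mem _
        add_mem' := by
          intro a b ha hb
          simp only [Set.mem_setOf_eq, hadd]
          exact Submodule.add_mem _ ha hb
        neg_mem' := by
          intro a ha
          simp only [Set.mem_setOf_eq, hneg]
          exact Submodule.neg_mem _ ha }
    have hle : AddSubgroup.closure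
        {z : Fin d → ℤ | ∃ u v, 0 < F u ∧ 0 < F v ∧ z = u - v} ≤ H := by
      rw [AddSubgroup.closure_le]
      rintro z ⟨u, v, hu, hv, rfl⟩
      show c (u - v) ∈ vectorSpan ℝ E
      rw [hsub, vectorSpan_def]
      exact Submodule.subset_span (Set.vsub_mem_vsub ⟨u, hu, rfl⟩ ⟨v, hv, rfl⟩)
    rw [haper] at hle
    exact fun z => hle (AddSubgroup.mem_top z)
  rw [Submodule.eq_top_iff']
  intro y
  have hy : y = ∑ j, y j • c (Pi.single j 1) := by
    funext i
    simp only [Finset.sum_apply, Pi.smul_apply, smul_eq_mul, hc]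
    rw [Finset.sum_eq_single i]
    · simp
    · intro b _ hb
      simp [Pi.single_apply, (Ne.symm hb)]
    · simp
  rw [hy]
  exact Submodule.sum_mem _ fun j _ => Submodule.smul_mem _ _ (hczmem _)


lemma aux_lin {d : ℕ} (ε : ℝ) (hε : 0 < ε) (x : Fin d → ℤ) (i : Fin d) (a : ℝ) :
    |(x i : ℝ) - a| ≤ (2/ε + |a|) * Real.exp (ε/2 * ∑ k, |(x k : ℝ)|) := by
  have hs : (0:ℝ) ≤ ∑ k, |(x k : ℝ)| := Finset.sum_nonneg fun k _ => abs_nonneg _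
  have h1 : |(x i : ℝ)| ≤ ∑ k, |(x k : ℝ)| :=
    Finset.single_le_sum (f := fun k => |(x k : ℝ)|) (fun k _ => abs_nonneg _) (Finset.mem_univ i)
  have h2 : ε/2 * ∑ k, |(x k : ℝ)| ≤ Real.exp (ε/2 * ∑ k, |(x k : ℝ)|) := by
    have := Real.add_one_le_exp (ε/2 * ∑ k, |(x k : ℝ)|); linarith
  have h3 : (1:ℝ) ≤ Real.exp (ε/2 * ∑ k, |(x k : ℝ)|) := Real.one_le_exp (by positivity)
  have habs : |(x i : ℝ) - a| ≤ |(x i : ℝ)| + |a| := by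
    calc |(x i : ℝ) - a| = |(x i : ℝ) + (-a)| := by ring_nf
      _ ≤ |(x i : ℝ)| + |(-a)| := abs_add_le _ _
      _ = |(x i : ℝ)| + |a| := by rw [abs_neg]
  have h4 : |(x i : ℝ)| ≤ 2/ε * Real.exp (ε/2 * ∑ k, |(x k : ℝ)|) := by
    rw [div_mul_eq_mul_div, le_div_iff₀ hε]
    nlinarith [mul_le_mul_of_nonneg_left h1 hε.le]
  have h5 : |a| ≤ |a| * Real.exp (ε/2 * ∑ k, |(x k : ℝ)|) :=
    le_mul_of_one_le_right (abs_nonneg a) h3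
  have h6 : (2/ε + |a|) * Real.exp (ε/2 * ∑ k, |(x k : ℝ)|)
      = 2/ε * Real.exp (ε/2 * ∑ k, |(x k : ℝ)|)
        + |a| * Real.exp (ε/2 * ∑ k, |(x k : ℝ)|) := by ring
  linarith

lemma aux_q2 {d : ℕ} (ε : ℝ) (hε : 0 < ε) (i j : Fin d) (a b : ℝ) (x : Fin d → ℤ) :
    |((x i : ℝ) - a) * ((x j : ℝ) - b)|
      ≤ (2/ε + |a|) * (2/ε + |b|) * Real.exp (ε * ∑ k, |(x k : ℝ)|) := by
  have h1 := aux_lin ε hε x i a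
  have h2 := aux_lin ε hε x j b
  have hE : Real.exp (ε/2 * ∑ k, |(x k : ℝ)|) * Real.exp (ε/2 * ∑ k, |(x k : ℝ)|)
      = Real.exp (ε * ∑ k, |(x k : ℝ)|) := by
    rw [← Real.exp_add]; ring_nf
  rw [abs_mul]
  calc |(x i : ℝ) - a| * |(x j : ℝ) - b|
      ≤ ((2/ε + |a|) * Real.exp (ε/2 * ∑ k, |(x k : ℝ)|))
        * ((2/ε + |b|) * Real.exp (ε/2 * ∑ k, |(x k : ℝ)|)) := by
        refine mul_le_mul h1 h2 (abs_nonneg _) (by positivity)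
    _ = (2/ε + |a|) * (2/ε + |b|) * (Real.exp (ε/2 * ∑ k, |(x k : ℝ)|)
        * Real.exp (ε/2 * ∑ k, |(x k : ℝ)|)) := by ring
    _ = (2/ε + |a|) * (2/ε + |b|) * Real.exp (ε * ∑ k, |(x k : ℝ)|) := by rw [hE]

lemma aux_q1 {d : ℕ} (ε : ℝ) (hε : 0 < ε) (j : Fin d) (x : Fin d → ℤ) :
    |(x j : ℝ)| ≤ 1/ε * Real.exp (ε * ∑ k, |(x k : ℝ)|) := by
  have hs : (0:ℝ) ≤ ∑ k, |(x k : ℝ)| := Finset.sum_nonneg fun k _ => abs_nonneg _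
  have h1 : |(x j : ℝ)| ≤ ∑ k, |(x k : ℝ)| :=
    Finset.single_le_sum (f := fun k => |(x k : ℝ)|) (fun k _ => abs_nonneg _) (Finset.mem_univ j)
  have h2 : ε * ∑ k, |(x k : ℝ)| ≤ Real.exp (ε * ∑ k, |(x k : ℝ)|) := by
    have := Real.add_one_le_exp (ε * ∑ k, |(x k : ℝ)|); linarith
  rw [div_mul_eq_mul_div, one_mul, le_div_iff₀ hε]
  nlinarith [mul_le_mul_of_nonneg_left h1 hε.le]

lemma aux_q0 {d : ℕ} (ε : ℝ) (hε : 0 < ε) (x : Fin d → ℤ) :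
    |(1:ℝ)| ≤ 1 * Real.exp (ε * ∑ k, |(x k : ℝ)|) := by
  rw [abs_one, one_mul]
  exact Real.one_le_exp (by positivity)


lemma aux_master {d : ℕ} (F : (Fin d → ℤ) → ℝ) (hF0 : ∀ y, 0 ≤ F y)
    (θ₀ : Fin d → ℝ) (ε C : ℝ) (hε : 0 < ε)
    (hsum : ∀ η : Fin d → ℝ, dist η θ₀ ≤ 2*ε →
      Summable (fun x : Fin d → ℤ => F x * Real.exp (∑ i, η i * (x i : ℝ))))
    (q : (Fin d → ℤ) → ℝ)
    (hq : ∀ x : Fin d → ℤ, |q x| ≤ C * Real.exp (ε * ∑ i, |(x i : ℝ)|)) :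
    ∃ G : (Fin d → ℤ) → ℝ, Summable G ∧
      ∀ θ, dist θ θ₀ ≤ ε → ∀ x, |F x * Real.exp (∑ i, θ i * (x i : ℝ)) * q x| ≤ G x := by
  classical
  set η : Finset (Fin d) → (Fin d → ℝ) :=
    fun S => fun i => θ₀ i + 2*ε*(if i ∈ S then 1 else -1) with hη
  have hdist : ∀ S, dist (η S) θ₀ ≤ 2*ε := by
    intro S
    rw [dist_pi_le_iff (by positivity)]
    intro i
    rw [Real.dist_eq]
    by_cases h : i ∈ S <;> simp [hη, h] <;> rw [abs_of_nonneg (by positivity)]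
  have hC : 0 ≤ C := by
    have h0 := hq 0
    have h1 : (0:ℝ) ≤ |q 0| := abs_nonneg _
    simp at h0
    nlinarith
  refine ⟨fun x => C * ∑ S ∈ Finset.univ.powerset,
      F x * Real.exp (∑ i, η S i * (x i : ℝ)), ?_, ?_⟩
  · exact (summable_sum fun S _ => hsum (η S) (hdist S)).mul_left C
  · intro θ hθ x
    have hFx := hF0 x
    have e1 : |F x * Real.exp (∑ i, θ i * (x i : ℝ)) * q x|
        = F x * Real.exp (∑ i, θ i * (x i : ℝ)) * |q x| := by
      rw [abs_mul, abs_of_nonneg (by positivity)]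
    rw [e1]
    have e2 : F x * Real.exp (∑ i, θ i * (x i : ℝ)) * |q x|
        ≤ C * (F x * (Real.exp (∑ i, θ i * (x i : ℝ))
            * Real.exp (ε * ∑ i, |(x i : ℝ)|))) := by
      have := hq x
      nlinarith [Real.exp_pos (∑ i, θ i * (x i : ℝ)), mul_le_mul_of_nonneg_left this
        (mul_nonneg hFx (Real.exp_pos (∑ i, θ i * (x i : ℝ))).le)]
    refine e2.trans ?_
    have e3 : Real.exp (∑ i, θ i * (x i : ℝ)) * Real.exp (ε * ∑ i, |(x i : ℝ)|)
        ≤ Real.exp (∑ i, θ₀ i * (x i : ℝ)) * Real.exp (2*ε * ∑ i, |(x i : ℝ)|) := by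
      rw [← Real.exp_add, ← Real.exp_add, Real.exp_le_exp]
      have : ∑ i, θ i * (x i : ℝ) - ∑ i, θ₀ i * (x i : ℝ) ≤ ε * ∑ i, |(x i : ℝ)| := by
        rw [← Finset.sum_sub_distrib, Finset.mul_sum]
        refine Finset.sum_le_sum fun i _ => ?_
        have h1 : |θ i - θ₀ i| ≤ ε := by
          have := dist_le_pi_dist θ θ₀ i
          rw [Real.dist_eq] at this
          linarith
        calc θ i * (x i : ℝ) - θ₀ i * (x i : ℝ) = (θ i - θ₀ i) * (x i : ℝ) := by ring
          _ ≤ |(θ i - θ₀ i) * (x i : ℝ)| := le_abs_self _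
          _ = |θ i - θ₀ i| * |(x i : ℝ)| := abs_mul _ _
          _ ≤ ε * |(x i : ℝ)| := by
              exact mul_le_mul_of_nonneg_right h1 (abs_nonneg _)
      linarith
    have e4 : Real.exp (∑ i, θ₀ i * (x i : ℝ)) * Real.exp (2*ε * ∑ i, |(x i : ℝ)|)
        ≤ ∑ S ∈ Finset.univ.powerset, Real.exp (∑ i, η S i * (x i : ℝ)) := by
      have key : ∀ S ∈ Finset.univ.powerset,
          Real.exp (∑ i, η S i * (x i : ℝ))
          = Real.exp (∑ i, θ₀ i * (x i : ℝ)) *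
            ((∏ i ∈ S, Real.exp (2*ε*(x i : ℝ))) *
             ∏ i ∈ Finset.univ \ S, Real.exp (2*ε*(-(x i : ℝ)))) := by
        intro S _
        rw [← Real.exp_sum, ← Real.exp_sum, ← Real.exp_add, ← Real.exp_add, Real.exp_eq_exp]
        have : ∑ i, η S i * (x i : ℝ)
            = ∑ i, θ₀ i * (x i : ℝ) + ∑ i, 2*ε*(if i ∈ S then 1 else -1) * (x i : ℝ) := by
          rw [← Finset.sum_add_distrib]
          refine Finset.sum_congr rfl fun i _ => ?_
          simp only [hη]
          by_cases h : i ∈ S <;> simp [h] <;> ring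
        rw [this]
        congr 1
        rw [← Finset.sum_sdiff (Finset.subset_univ S), add_comm]
        congr 1
        · refine Finset.sum_congr rfl fun i hi => ?_
          rw [if_pos hi]
          ring
        · refine Finset.sum_congr rfl fun i hi => ?_
          rw [if_neg (Finset.mem_sdiff.1 hi).2]
          ring
      rw [Finset.sum_congr rfl key, ← Finset.mul_sum, ← Finset.prod_add]
      have : Real.exp (2*ε * ∑ i, |(x i : ℝ)|)
          = ∏ i, Real.exp (2*ε*|(x i : ℝ)|) := by
        rw [← Real.exp_sum, Finset.mul_sum]
      rw [this]
      refine mul_le_mul_of_nonneg_left (Finset.prod_le_prod (fun i _ => (Real.exp_pos _).le)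
        fun i _ => ?_) (Real.exp_pos _).le
      rcases abs_choice ((x i : ℝ)) with h | h <;> rw [h]
      · nlinarith [Real.exp_pos (2*ε*(-(x i:ℝ)))]
      · have : 2*ε*(-(x i:ℝ)) = 2*ε*|(x i : ℝ)| := by rw [← h]
        nlinarith [Real.exp_pos (2*ε*(x i:ℝ))]
    calc C * (F x * (Real.exp (∑ i, θ i * (x i : ℝ)) * Real.exp (ε * ∑ i, |(x i : ℝ)|)))
        ≤ C * (F x * (Real.exp (∑ i, θ₀ i * (x i : ℝ))
            * Real.exp (2*ε * ∑ i, |(x i : ℝ)|))) := by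
          exact mul_le_mul_of_nonneg_left (mul_le_mul_of_nonneg_left e3 hFx) hC
      _ ≤ C * ∑ S ∈ Finset.univ.powerset, F x * Real.exp (∑ i, η S i * (x i : ℝ)) := by
          rw [← Finset.mul_sum]
          exact mul_le_mul_of_nonneg_left (mul_le_mul_of_nonneg_left e4 hFx) hC

lemma aux_contOn {d : ℕ} (F : (Fin d → ℤ) → ℝ) (hF0 : ∀ y, 0 ≤ F y)
    (θ₀ : Fin d → ℝ) (ε C : ℝ) (hε : 0 < ε)
    (hsum : ∀ η : Fin d → ℝ, dist η θ₀ ≤ 2*ε →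
      Summable (fun x : Fin d → ℤ => F x * Real.exp (∑ i, η i * (x i : ℝ))))
    (q : (Fin d → ℤ) → ℝ)
    (hq : ∀ x : Fin d → ℤ, |q x| ≤ C * Real.exp (ε * ∑ i, |(x i : ℝ)|)) :
    ContinuousOn (fun θ : Fin d → ℝ => ∑' x : Fin d → ℤ,
        F x * Real.exp (∑ i, θ i * (x i : ℝ)) * q x) (Metric.closedBall θ₀ ε)
    ∧ ∀ θ ∈ Metric.closedBall θ₀ ε,
        Summable (fun x : Fin d → ℤ => F x * Real.exp (∑ i, θ i * (x i : ℝ)) * q x) := by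
  obtain ⟨G, hG, hbound⟩ := aux_master F hF0 θ₀ ε C hε hsum q hq
  have hb : ∀ (x : Fin d → ℤ) (θ : Fin d → ℝ), θ ∈ Metric.closedBall θ₀ ε →
      ‖F x * Real.exp (∑ i, θ i * (x i : ℝ)) * q x‖ ≤ G x := fun x θ hθ => by
    rw [Real.norm_eq_abs]
    exact hbound θ (Metric.mem_closedBall.1 hθ) x
  constructor
  · refine (tendstoUniformlyOn_tsum hG hb).continuousOn
      (Filter.Frequently.of_forall fun t => ?_)
    refine (continuous_finset_sum t fun x _ => ?_).continuousOn
    exact (continuous_const.mul (Real.continuous_exp.comp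
      (continuous_finset_sum _ fun i _ => (continuous_apply i).mul continuous_const))).mul
      continuous_const
  · intro θ hθ
    exact Summable.of_norm_bounded hG (fun x => hb x θ hθ)

lemma aux_main {d : ℕ} (F : (Fin d → ℤ) → ℝ)
    (hF0 : ∀ y, 0 ≤ F y) (hF1 : ∑' y, F y = 1)
    (haper : AddSubgroup.closure
        {z : Fin d → ℤ | ∃ u v, 0 < F u ∧ 0 < F v ∧ z = u - v} = ⊤)
    (L : (Fin d → ℝ) → ℝ≥0∞)
    (hL : ∀ θ, L θ = ∑' x : Fin d → ℤ,
        ENNReal.ofReal (F x * Real.exp (∑ i, θ i * (x i : ℝ))))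
    (φ : (Fin d → ℝ) → ℝ) (hφ : ∀ θ, φ θ = Real.log (L θ).toReal)
    (m : (Fin d → ℝ) → (Fin d → ℝ))
    (hm : ∀ θ j, m θ j = ∑' x : Fin d → ℤ,
        F x * Real.exp ((∑ i, θ i * (x i : ℝ)) - φ θ) * (x j : ℝ))
    (Sig : (Fin d → ℝ) → Matrix (Fin d) (Fin d) ℝ)
    (hSig : ∀ θ i j, Sig θ i j = ∑' x : Fin d → ℤ,
        F x * Real.exp ((∑ i', θ i' * (x i' : ℝ)) - φ θ) *
          (((x i : ℝ) - m θ i) * ((x j : ℝ) - m θ j)))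
    (θ₀ : Fin d → ℝ) (hθ₀ : θ₀ ∈ interior {θ | L θ ≠ ⊤}) :
    0 < (Sig θ₀).det ∧ ContinuousAt (fun θ => (Sig θ).det) θ₀ := by
  classical
  obtain ⟨r, hr, hball⟩ := Metric.isOpen_iff.1 isOpen_interior θ₀ hθ₀
  set ε := r/4 with hεdef
  have hε : 0 < ε := by positivity
  have hsub : Metric.closedBall θ₀ (2*ε) ⊆ interior {θ | L θ ≠ ⊤} := by
    intro η hη
    apply hball
    rw [Metric.mem_ball]
    rw [Metric.mem_closedBall] at hη
    have h4 : (0:ℝ) < r/4 := by positivity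
    calc dist η θ₀ ≤ 2*ε := hη
      _ < r := by rw [hεdef]; linarith
  have hsum : ∀ η : Fin d → ℝ, dist η θ₀ ≤ 2*ε →
      Summable (fun x : Fin d → ℤ => F x * Real.exp (∑ i, η i * (x i : ℝ))) := by
    intro η hη
    have hmem : L η ≠ ⊤ := interior_subset (hsub hη)
    rw [hL η] at hmem
    exact aux_summable_of_ne_top (fun x => mul_nonneg (hF0 x) (Real.exp_pos _).le) hmem
  obtain ⟨x₀, hx₀⟩ := aux_exists_pos hF0 hF1
  set B := Metric.closedBall θ₀ ε with hBdef
  have hB0 : θ₀ ∈ B := Metric.mem_closedBall_self hε.le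
  -- tsum functions
  set fZ : (Fin d → ℝ) → ℝ :=
    fun θ => ∑' x : Fin d → ℤ, F x * Real.exp (∑ i, θ i * (x i : ℝ)) * 1 with hfZ
  set fB : Fin d → (Fin d → ℝ) → ℝ :=
    fun j θ => ∑' x : Fin d → ℤ, F x * Real.exp (∑ i, θ i * (x i : ℝ)) * (x j : ℝ) with hfB
  set fA : Fin d → Fin d → (Fin d → ℝ) → ℝ :=
    fun i j θ => ∑' x : Fin d → ℤ,
      F x * Real.exp (∑ i', θ i' * (x i' : ℝ)) * ((x i : ℝ) * (x j : ℝ)) with hfA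
  have hZ := aux_contOn F hF0 θ₀ ε 1 hε hsum (fun _ => (1:ℝ)) (fun x => aux_q0 ε hε x)
  have hBj := fun j : Fin d => aux_contOn F hF0 θ₀ ε (1/ε) hε hsum
      (fun x => (x j : ℝ)) (fun x => aux_q1 ε hε j x)
  have hAij := fun i j : Fin d => aux_contOn F hF0 θ₀ ε ((2/ε + |(0:ℝ)|) * (2/ε + |(0:ℝ)|)) hε
      hsum (fun x => (x i : ℝ) * (x j : ℝ))
      (fun x => by simpa using aux_q2 ε hε i j 0 0 x)
  have hZc : ContinuousOn fZ B := hZ.1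
  have hBc : ∀ j, ContinuousOn (fB j) B := fun j => (hBj j).1
  have hAc : ∀ i j, ContinuousOn (fA i j) B := fun i j => (hAij i j).1
  have sZ : ∀ θ ∈ B, Summable
      (fun x : Fin d → ℤ => F x * Real.exp (∑ i, θ i * (x i : ℝ)) * 1) := hZ.2
  have sB : ∀ (j : Fin d), ∀ θ ∈ B, Summable
      (fun x : Fin d → ℤ => F x * Real.exp (∑ i, θ i * (x i : ℝ)) * (x j : ℝ)) :=
    fun j => (hBj j).2
  have sA : ∀ (i j : Fin d), ∀ θ ∈ B, Summable
      (fun x : Fin d → ℤ => F x * Real.exp (∑ i', θ i' * (x i' : ℝ)) * ((x i : ℝ) * (x j : ℝ))) :=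
    fun i j => (hAij i j).2
  have hZpos : ∀ θ ∈ B, 0 < fZ θ := fun θ hθ =>
    Summable.tsum_pos (sZ θ hθ) (fun x => mul_nonneg (mul_nonneg (hF0 x) (Real.exp_pos _).le) zero_le_one) x₀
      (mul_pos (mul_pos hx₀ (Real.exp_pos _)) one_pos)
  have htoReal : ∀ θ ∈ B, (L θ).toReal = fZ θ := by
    intro θ hθ
    have hθD : θ ∈ Metric.closedBall θ₀ (2*ε) :=
      Metric.closedBall_subset_closedBall (by linarith) hθ
    rw [hL θ, ENNReal.tsum_toReal_eq (fun a => ENNReal.ofReal_ne_top)]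
    exact tsum_congr fun x => by
      rw [ENNReal.toReal_ofReal (mul_nonneg (hF0 x) (Real.exp_pos _).le)]; ring
  have hexpφ : ∀ θ ∈ B, Real.exp (φ θ) = fZ θ := by
    intro θ hθ
    rw [hφ θ, htoReal θ hθ, Real.exp_log (hZpos θ hθ)]
  have hmθ : ∀ θ ∈ B, ∀ j, m θ j = fB j θ / fZ θ := by
    intro θ hθ j
    rw [hm θ j]
    have key : ∀ x : Fin d → ℤ,
        F x * Real.exp ((∑ i, θ i * (x i : ℝ)) - φ θ) * (x j : ℝ)
        = (F x * Real.exp (∑ i, θ i * (x i : ℝ)) * (x j : ℝ)) / fZ θ := by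
      intro x
      rw [Real.exp_sub, hexpφ θ hθ]
      ring
    rw [tsum_congr key, tsum_div_const]
  have hSigEntry : ∀ θ ∈ B, ∀ i j,
      Sig θ i j = fA i j θ / fZ θ - (fB i θ / fZ θ) * (fB j θ / fZ θ) := by
    intro θ hθ i j
    have hZne : fZ θ ≠ 0 := ne_of_gt (hZpos θ hθ)
    rw [hSig θ i j]
    have key : ∀ x : Fin d → ℤ,
        F x * Real.exp ((∑ i', θ i' * (x i' : ℝ)) - φ θ) *
          (((x i : ℝ) - m θ i) * ((x j : ℝ) - m θ j))
        = (F x * Real.exp (∑ i', θ i' * (x i' : ℝ)) * ((x i : ℝ) * (x j : ℝ))) / fZ θ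
          - (m θ j / fZ θ) * (F x * Real.exp (∑ i', θ i' * (x i' : ℝ)) * (x i : ℝ))
          - (m θ i / fZ θ) * (F x * Real.exp (∑ i', θ i' * (x i' : ℝ)) * (x j : ℝ))
          + (m θ i * m θ j / fZ θ) * (F x * Real.exp (∑ i', θ i' * (x i' : ℝ)) * 1) := by
      intro x
      rw [Real.exp_sub, hexpφ θ hθ]
      field_simp
      ring
    have s1 : Summable (fun x : Fin d → ℤ =>
        (F x * Real.exp (∑ i', θ i' * (x i' : ℝ)) * ((x i : ℝ) * (x j : ℝ))) / fZ θ) :=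
      (sA i j θ hθ).div_const _
    have s2 : Summable (fun x : Fin d → ℤ =>
        (m θ j / fZ θ) * (F x * Real.exp (∑ i', θ i' * (x i' : ℝ)) * (x i : ℝ))) :=
      (sB i θ hθ).mul_left _
    have s3 : Summable (fun x : Fin d → ℤ =>
        (m θ i / fZ θ) * (F x * Real.exp (∑ i', θ i' * (x i' : ℝ)) * (x j : ℝ))) :=
      (sB j θ hθ).mul_left _
    have s4 : Summable (fun x : Fin d → ℤ =>
        (m θ i * m θ j / fZ θ) * (F x * Real.exp (∑ i', θ i' * (x i' : ℝ)) * 1)) :=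
      (sZ θ hθ).mul_left _
    rw [tsum_congr key, Summable.tsum_add ((s1.sub s2).sub s3) s4, Summable.tsum_sub (s1.sub s2) s3,
      Summable.tsum_sub s1 s2, tsum_div_const, tsum_mul_left, tsum_mul_left, tsum_mul_left,
      hmθ θ hθ i, hmθ θ hθ j]
    have eA : (∑' x : Fin d → ℤ,
        F x * Real.exp (∑ i', θ i' * (x i' : ℝ)) * ((x i : ℝ) * (x j : ℝ))) = fA i j θ := rfl
    have e1 : (∑' x : Fin d → ℤ,
        F x * Real.exp (∑ i', θ i' * (x i' : ℝ)) * (x i : ℝ)) = fB i θ := rfl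
    have e2 : (∑' x : Fin d → ℤ,
        F x * Real.exp (∑ i', θ i' * (x i' : ℝ)) * (x j : ℝ)) = fB j θ := rfl
    have e0 : (∑' x : Fin d → ℤ,
        F x * Real.exp (∑ i', θ i' * (x i' : ℝ)) * 1) = fZ θ := rfl
    rw [eA, e1, e2, e0]
    field_simp
    ring
  -- continuity of the entry functions and determinant
  have hZne : ∀ θ ∈ B, fZ θ ≠ 0 := fun θ hθ => ne_of_gt (hZpos θ hθ)
  have hmatc : ContinuousOn (fun θ => Matrix.of (fun i j : Fin d =>
      fA i j θ / fZ θ - (fB i θ / fZ θ) * (fB j θ / fZ θ))) B := by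
    apply continuousOn_pi.2
    intro i
    apply continuousOn_pi.2
    intro j
    exact ((hAc i j).div hZc (hZne)).sub
      (((hBc i).div hZc hZne).mul ((hBc j).div hZc hZne))
  have hdetc : ContinuousOn (fun θ => (Matrix.of (fun i j : Fin d =>
      fA i j θ / fZ θ - (fB i θ / fZ θ) * (fB j θ / fZ θ))).det) B :=
    (continuous_id.matrix_det).comp_continuousOn hmatc
  have heq : Set.EqOn (fun θ => (Sig θ).det) (fun θ => (Matrix.of (fun i j : Fin d =>
      fA i j θ / fZ θ - (fB i θ / fZ θ) * (fB j θ / fZ θ))).det) B := by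
    intro θ hθ
    simp only
    congr 1
    exact Matrix.ext fun i j => hSigEntry θ hθ i j
  have hca : ContinuousAt (fun θ => (Sig θ).det) θ₀ := by
    have h1 : ContinuousAt (fun θ => (Matrix.of (fun i j : Fin d =>
        fA i j θ / fZ θ - (fB i θ / fZ θ) * (fB j θ / fZ θ))).det) θ₀ :=
      hdetc.continuousAt (Metric.closedBall_mem_nhds θ₀ hε)
    exact h1.congr (Filter.eventuallyEq_of_mem (Metric.closedBall_mem_nhds θ₀ hε)
      fun θ hθ => (heq hθ).symm)
  -- positivity of the determinant at θ₀
  have hZ0 : 0 < fZ θ₀ := hZpos θ₀ hB0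
  have hSigRaw : ∀ i j, Sig θ₀ i j = ∑' x : Fin d → ℤ,
      (F x * Real.exp (∑ i', θ₀ i' * (x i' : ℝ)) *
        (((x i : ℝ) - m θ₀ i) * ((x j : ℝ) - m θ₀ j))) / fZ θ₀ := by
    intro i j
    rw [hSig θ₀ i j]
    exact tsum_congr fun x => by rw [Real.exp_sub, hexpφ θ₀ hB0]; ring
  have sP : ∀ i j, Summable (fun x : Fin d → ℤ =>
      F x * Real.exp (∑ i', θ₀ i' * (x i' : ℝ)) *
        (((x i : ℝ) - m θ₀ i) * ((x j : ℝ) - m θ₀ j))) := by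
    intro i j
    have h := (((sA i j θ₀ hB0).sub ((sB i θ₀ hB0).mul_left (m θ₀ j))).sub
      (((sB j θ₀ hB0).mul_left (m θ₀ i)).sub ((sZ θ₀ hB0).mul_left (m θ₀ i * m θ₀ j))))
    exact h.congr fun x => by ring
  have hherm : (Sig θ₀).IsHermitian := by
    rw [Matrix.IsHermitian]
    ext i j
    rw [Matrix.conjTranspose_apply, star_trivial, hSigRaw j i, hSigRaw i j]
    exact tsum_congr fun x => by ring
  have hposdef : (Sig θ₀).PosDef := by
    refine Matrix.PosDef.of_dotProduct_mulVec_pos hherm fun v hv => ?_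
    have hstar : star v = v := by funext i; simp
    rw [hstar]
    have hdot : dotProduct v (Matrix.mulVec (Sig θ₀) v)
        = ∑ i, v i * ∑ j, Sig θ₀ i j * v j := by
      simp [dotProduct, Matrix.mulVec]
    rw [hdot]
    have hexists : ∃ y : Fin d → ℤ, 0 < F y ∧
        (∑ i, v i * ((y i : ℝ) - m θ₀ i)) ≠ 0 := by
      by_contra hcon
      push_neg at hcon
      apply hv
      have hval : ∀ y : Fin d → ℤ, 0 < F y →
          ∑ i, v i * (y i : ℝ) = ∑ i, v i * m θ₀ i := by
        intro y hy
        have h1 := hcon y hy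
        have h2 : ∑ i, v i * ((y i : ℝ) - m θ₀ i)
            = ∑ i, v i * (y i : ℝ) - ∑ i, v i * m θ₀ i := by
          rw [← Finset.sum_sub_distrib]
          exact Finset.sum_congr rfl fun i _ => by ring
        rw [h2] at h1
        linarith
      let H : AddSubgroup (Fin d → ℤ) :=
        { carrier := {z | ∑ i, v i * ((z i : ℤ) : ℝ) = 0}
          zero_mem' := by simp
          add_mem' := by
            intro a b ha hb
            simp only [Set.mem_setOf_eq] at ha hb ⊢
            have h3 : ∀ i, v i * (((a + b) i : ℤ) : ℝ)
                = v i * ((a i : ℤ) : ℝ) + v i * ((b i : ℤ) : ℝ) := by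
              intro i
              have : ((a + b) i : ℤ) = a i + b i := rfl
              rw [this]
              push_cast
              ring
            rw [Finset.sum_congr rfl fun i _ => h3 i, Finset.sum_add_distrib, ha, hb]
            ring
          neg_mem' := by
            intro a ha
            simp only [Set.mem_setOf_eq] at ha ⊢
            have h3 : ∀ i, v i * (((-a) i : ℤ) : ℝ) = -(v i * ((a i : ℤ) : ℝ)) := by
              intro i
              have : ((-a) i : ℤ) = -(a i) := rfl
              rw [this]
              push_cast
              ring
            rw [Finset.sum_congr rfl fun i _ => h3 i, Finset.sum_neg_distrib, ha]
            ring }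
      have hle : AddSubgroup.closure
          {z : Fin d → ℤ | ∃ u v', 0 < F u ∧ 0 < F v' ∧ z = u - v'} ≤ H := by
        rw [AddSubgroup.closure_le]
        rintro z ⟨u, u', hu, hu', rfl⟩
        show ∑ i, v i * (((u - u') i : ℤ) : ℝ) = 0
        have h3 : ∀ i, v i * (((u - u') i : ℤ) : ℝ)
            = v i * ((u i : ℤ) : ℝ) - v i * ((u' i : ℤ) : ℝ) := by
          intro i
          have : ((u - u') i : ℤ) = u i - u' i := rfl
          rw [this]
          push_cast
          ring
        rw [Finset.sum_congr rfl fun i _ => h3 i, Finset.sum_sub_distrib,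
          hval u hu, hval u' hu']
        ring
      rw [haper] at hle
      funext j
      have hj : ∑ i, v i * (((Pi.single j 1 : Fin d → ℤ) i : ℤ) : ℝ) = 0 :=
        hle (AddSubgroup.mem_top _)
      have h4 : ∑ i, v i * (((Pi.single j 1 : Fin d → ℤ) i : ℤ) : ℝ) = v j := by
        rw [Finset.sum_eq_single j]
        · simp
        · intro b _ hb
          rw [Pi.single_eq_of_ne hb]
          simp
        · intro h
          exact absurd (Finset.mem_univ j) h
      rw [h4] at hj
      simpa using hj
    obtain ⟨y, hy, hSy⟩ := hexists
    have hsum2 : ∀ i j, Summable (fun x : Fin d → ℤ =>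
        v i * ((F x * Real.exp (∑ i', θ₀ i' * (x i' : ℝ)) *
          (((x i : ℝ) - m θ₀ i) * ((x j : ℝ) - m θ₀ j))) / fZ θ₀ * v j)) :=
      fun i j => (((sP i j).div_const _).mul_right _).mul_left _
    have hQid : ∀ x : Fin d → ℤ, (∑ i, ∑ j,
        v i * ((F x * Real.exp (∑ i', θ₀ i' * (x i' : ℝ)) *
          (((x i : ℝ) - m θ₀ i) * ((x j : ℝ) - m θ₀ j))) / fZ θ₀ * v j))
        = (F x * Real.exp (∑ i', θ₀ i' * (x i' : ℝ)) *
            (∑ i, v i * ((x i : ℝ) - m θ₀ i))^2) / fZ θ₀ := by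
      intro x
      rw [sq, Finset.sum_mul_sum, Finset.mul_sum, Finset.sum_div]
      refine Finset.sum_congr rfl fun i _ => ?_
      rw [Finset.mul_sum, Finset.sum_div]
      refine Finset.sum_congr rfl fun j _ => ?_
      ring
    have hQ : ∑ i, v i * ∑ j, Sig θ₀ i j * v j
        = ∑' x : Fin d → ℤ, (F x * Real.exp (∑ i', θ₀ i' * (x i' : ℝ)) *
            (∑ i, v i * ((x i : ℝ) - m θ₀ i))^2) / fZ θ₀ := by
      have step1 : ∀ i, v i * ∑ j, Sig θ₀ i j * v j
          = ∑' x : Fin d → ℤ, ∑ j, v i * ((F x * Real.exp (∑ i', θ₀ i' * (x i' : ℝ)) *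
              (((x i : ℝ) - m θ₀ i) * ((x j : ℝ) - m θ₀ j))) / fZ θ₀ * v j) := by
        intro i
        have h5 : ∀ j, Sig θ₀ i j * v j = ∑' x : Fin d → ℤ,
            (F x * Real.exp (∑ i', θ₀ i' * (x i' : ℝ)) *
              (((x i : ℝ) - m θ₀ i) * ((x j : ℝ) - m θ₀ j))) / fZ θ₀ * v j := by
          intro j
          rw [hSigRaw i j]
          exact (tsum_mul_right).symm
        rw [Finset.sum_congr rfl fun j _ => h5 j,
          ← Summable.tsum_finsetSum (fun j _ => ((sP i j).div_const _).mul_right _), ← tsum_mul_left]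
        exact tsum_congr fun x => by rw [Finset.mul_sum]
      calc ∑ i, v i * ∑ j, Sig θ₀ i j * v j
          = ∑ i, ∑' x : Fin d → ℤ, ∑ j,
              v i * ((F x * Real.exp (∑ i', θ₀ i' * (x i' : ℝ)) *
                (((x i : ℝ) - m θ₀ i) * ((x j : ℝ) - m θ₀ j))) / fZ θ₀ * v j) :=
            Finset.sum_congr rfl fun i _ => step1 i
        _ = ∑' x : Fin d → ℤ, ∑ i, ∑ j,
              v i * ((F x * Real.exp (∑ i', θ₀ i' * (x i' : ℝ)) *
                (((x i : ℝ) - m θ₀ i) * ((x j : ℝ) - m θ₀ j))) / fZ θ₀ * v j) :=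
            (Summable.tsum_finsetSum fun i _ => summable_sum fun j _ => hsum2 i j).symm
        _ = ∑' x : Fin d → ℤ, (F x * Real.exp (∑ i', θ₀ i' * (x i' : ℝ)) *
              (∑ i, v i * ((x i : ℝ) - m θ₀ i))^2) / fZ θ₀ := tsum_congr hQid
    rw [hQ]
    refine Summable.tsum_pos ?_ (fun x => ?_) y ?_
    · exact ((summable_sum fun i (_ : i ∈ Finset.univ) =>
        summable_sum fun j (_ : j ∈ Finset.univ) => hsum2 i j)).congr hQid
    · exact div_nonneg (mul_nonneg (mul_nonneg (hF0 x) (Real.exp_pos _).le)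
        (sq_nonneg _)) hZ0.le
    · refine div_pos (mul_pos (mul_pos hy (Real.exp_pos _)) ?_) hZ0
      exact lt_of_le_of_ne (sq_nonneg _) (Ne.symm (pow_ne_zero 2 hSy))
  exact ⟨hposdef.det_pos, hca⟩


/-- for an aperiodic probability distribution `F` on `ℤ^d`, the
interior of the convex hull of its support is non-empty, and on any compact
subset `K` of the interior of the domain of the log-Laplace transform, the
determinant of the covariance matrix `Σ_θ` of the tilted law is bounded away
from `0` uniformly in `θ ∈ K`. -/
theorem det_tilted_covariance_bounded_below
    (d : ℕ) (F : (Fin d → ℤ) → ℝ)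
    (hF0 : ∀ y, 0 ≤ F y) (hF1 : ∑' y, F y = 1)
    (haper : AddSubgroup.closure
        {z : Fin d → ℤ | ∃ u v, 0 < F u ∧ 0 < F v ∧ z = u - v} = ⊤)
    (L : (Fin d → ℝ) → ℝ≥0∞)
    (hL : ∀ θ, L θ = ∑' x : Fin d → ℤ,
        ENNReal.ofReal (F x * Real.exp (∑ i, θ i * (x i : ℝ))))
    (φ : (Fin d → ℝ) → ℝ) (hφ : ∀ θ, φ θ = Real.log (L θ).toReal)
    (m : (Fin d → ℝ) → (Fin d → ℝ))
    (hm : ∀ θ j, m θ j = ∑' x : Fin d → ℤ,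
        F x * Real.exp ((∑ i, θ i * (x i : ℝ)) - φ θ) * (x j : ℝ))
    (Sig : (Fin d → ℝ) → Matrix (Fin d) (Fin d) ℝ)
    (hSig : ∀ θ i j, Sig θ i j = ∑' x : Fin d → ℤ,
        F x * Real.exp ((∑ i', θ i' * (x i' : ℝ)) - φ θ) *
          (((x i : ℝ) - m θ i) * ((x j : ℝ) - m θ j))) :
    (interior (convexHull ℝ
        ((fun x : Fin d → ℤ => fun i => (x i : ℝ)) '' {x | 0 < F x}))).Nonempty ∧
    (∀ K : Set (Fin d → ℝ), IsCompact K → K ⊆ interior {θ | L θ ≠ ⊤} →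
      ∃ ε > 0, ∀ θ ∈ K, ε ≤ (Sig θ).det) := by
  constructor
  · exact aux_part1 F hF0 hF1 haper
  · intro K hK hKD
    rcases K.eq_empty_or_nonempty with hKe | hne
    · exact ⟨1, one_pos, by simp [hKe]⟩
    · have hcont : ContinuousOn (fun θ => (Sig θ).det) K := fun θ hθ =>
        ((aux_main F hF0 hF1 haper L hL φ hφ m hm Sig hSig θ (hKD hθ)).2).continuousWithinAt
      obtain ⟨θs, hθsK, hmin⟩ := hK.exists_isMinOn hne hcont
      exact ⟨(Sig θs).det,
        (aux_main F hF0 hF1 haper L hL φ hφ m hm Sig hSig θs (hKD hθsK)).1,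
        fun θ hθ => hmin hθ⟩
end

section
/- Let F be an aperiodic distribution on Z^d with convex conjugate ψ of its log-Laplace transform. If (s_n) in Z^d satisfies sup_n |s_n/n| < ∞ and ψ(s_n/n) → 0, then for all b ∈ Z^d and m ∈ Z, ψ((s_n + b)/(n + m)) → 0 as n → ∞. -/
open Filter
open scoped ENNReal

/-- for an aperiodic distribution `F` on `ℤ^d`, if
`sup_n |s_n/n|₁ < ∞` and `ψ(s_n/n) → 0`, then for every `b ∈ ℤ^d` and `m ∈ ℤ`,
`ψ((s_n + b)/(n + m)) → 0`. -/
theorem conjugate_tendsto_zero_shifted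
    (d : ℕ) (F : (Fin d → ℤ) → ℝ)
    (hF0 : ∀ y, 0 ≤ F y) (hF1 : ∑' y, F y = 1)
    (haper : AddSubgroup.closure
        {z : Fin d → ℤ | ∃ u v, 0 < F u ∧ 0 < F v ∧ z = u - v} = ⊤)
    (L : (Fin d → ℝ) → ℝ≥0∞)
    (hL : ∀ θ, L θ = ∑' x : Fin d → ℤ,
        ENNReal.ofReal (F x * Real.exp (∑ i, θ i * (x i : ℝ))))
    (φ : (Fin d → ℝ) → EReal)
    (hφ : ∀ θ, φ θ = if L θ = ⊤ then (⊤ : EReal)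
        else ((Real.log (L θ).toReal : ℝ) : EReal))
    (ψ : (Fin d → ℝ) → EReal)
    (hψ : ∀ x, ψ x = ⨆ θ ∈ {θ | L θ ≠ ⊤},
        (((∑ i, θ i * x i : ℝ)) : EReal) - φ θ)
    (s : ℕ → (Fin d → ℤ))
    (hbdd : ∃ C : ℝ, ∀ n : ℕ, 1 ≤ n → (∑ i, |(s n i : ℝ) / n|) ≤ C)
    (hpsi : Tendsto (fun n : ℕ => ψ (fun i => (s n i : ℝ) / n)) atTop
        (nhds (0 : EReal))) :
    ∀ (b : Fin d → ℤ) (m : ℤ),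
      Tendsto (fun n : ℕ => ψ (fun i => ((s n i : ℝ) + (b i : ℝ)) / ((n : ℝ) + (m : ℝ))))
        atTop (nhds (0 : EReal)) := by
  intro b m
  classical
  obtain ⟨C, hC⟩ := hbdd
  -- basic facts
  have hSum : Summable F := by
    by_contra h
    rw [tsum_eq_zero_of_not_summable h] at hF1
    norm_num at hF1
  have htsum1 : (∑' y, ENNReal.ofReal (F y)) = 1 := by
    rw [← ENNReal.ofReal_tsum_of_nonneg hF0 hSum, hF1, ENNReal.ofReal_one]
  have hL0 : L 0 = 1 := by
    rw [hL 0]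
    simp only [Pi.zero_apply, zero_mul, Finset.sum_const_zero, Real.exp_zero, mul_one]
    exact htsum1
  have hL0ne : L 0 ≠ ⊤ := by rw [hL0]; exact ENNReal.one_ne_top
  have hφr0 : Real.log (L 0).toReal = 0 := by rw [hL0]; simp
  have term_le : ∀ (q θ : Fin d → ℝ), L θ ≠ ⊤ →
      (((∑ i, θ i * q i) - Real.log (L θ).toReal : ℝ) : EReal) ≤ ψ q := by
    intro q θ hθ
    rw [hψ]
    refine le_trans (le_of_eq ?_) (le_iSup₂ (f := fun θ (_ : θ ∈ {θ | L θ ≠ ⊤}) =>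
      (((∑ i, θ i * q i : ℝ)) : EReal) - φ θ) θ hθ)
    rw [hφ, if_neg hθ, ← EReal.coe_sub]
  have hψ_nonneg : ∀ q, 0 ≤ ψ q := by
    intro q
    have h := term_le q 0 hL0ne
    simpa [hφr0] using h
  have ψ_le_of_good : ∀ (q : Fin d → ℝ) (M : ℝ),
      (∀ θ, L θ ≠ ⊤ → ∑ i, θ i * q i ≤ Real.log (L θ).toReal + M) →
      ψ q ≤ (M : EReal) := by
    intro q M hgood
    rw [hψ]
    refine iSup₂_le ?_
    intro θ hθ
    have hθ' : L θ ≠ ⊤ := hθ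
    rw [hφ, if_neg hθ', ← EReal.coe_sub]
    exact EReal.coe_le_coe_iff.2 (by linarith [hgood θ hθ'])
  have hSne : ∃ u, 0 < F u := by
    by_contra h
    push_neg at h
    have h0 : ∀ y, F y = 0 := fun y => le_antisymm (h y) (hF0 y)
    rw [tsum_congr h0] at hF1
    simp at hF1
  have good_pt : ∀ (θ : Fin d → ℝ), L θ ≠ ⊤ → ∀ u : Fin d → ℤ, 0 < F u →
      ∑ i, θ i * (u i : ℝ) ≤ Real.log (L θ).toReal + (-Real.log (F u)) := by
    intro θ hθ u hu
    have hle : ENNReal.ofReal (F u * Real.exp (∑ i, θ i * (u i : ℝ))) ≤ L θ := by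
      rw [hL θ]; exact ENNReal.le_tsum u
    have hle' : F u * Real.exp (∑ i, θ i * (u i : ℝ)) ≤ (L θ).toReal :=
      (ENNReal.ofReal_le_iff_le_toReal hθ).1 hle
    have hpos : 0 < F u * Real.exp (∑ i, θ i * (u i : ℝ)) :=
      mul_pos hu (Real.exp_pos _)
    have hlog := Real.log_le_log hpos hle'
    rw [Real.log_mul (ne_of_gt hu) (Real.exp_ne_zero _), Real.log_exp] at hlog
    linarith
  have key : ∀ (θ₀ : Fin d → ℝ) (cst : ℝ),
      (∀ u : Fin d → ℤ, 0 < F u → ∑ i, θ₀ i * (u i : ℝ) ≤ cst) →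
      L θ₀ ≤ ENNReal.ofReal (Real.exp cst) ∧
      (Real.exp cst ≤ (L θ₀).toReal →
        ∀ u : Fin d → ℤ, 0 < F u → ∑ i, θ₀ i * (u i : ℝ) = cst) := by
    intro θ₀ cst hle
    have hterm : ∀ x : Fin d → ℤ,
        ENNReal.ofReal (F x * Real.exp (∑ i, θ₀ i * (x i : ℝ))) ≤
        ENNReal.ofReal (F x * Real.exp cst) := by
      intro x
      apply ENNReal.ofReal_le_ofReal
      rcases eq_or_lt_of_le (hF0 x) with h | h
      · rw [← h]; simp
      · exact mul_le_mul_of_nonneg_left (Real.exp_le_exp.2 (hle x h)) (hF0 x)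
    have hsum2 : (∑' x : Fin d → ℤ, ENNReal.ofReal (F x * Real.exp cst)) =
        ENNReal.ofReal (Real.exp cst) := by
      have he : ∀ x : Fin d → ℤ, ENNReal.ofReal (F x * Real.exp cst) =
          ENNReal.ofReal (F x) * ENNReal.ofReal (Real.exp cst) := fun x =>
        ENNReal.ofReal_mul (hF0 x)
      rw [tsum_congr he, ENNReal.tsum_mul_right, htsum1, one_mul]
    have hLle : L θ₀ ≤ ENNReal.ofReal (Real.exp cst) := by
      rw [hL θ₀, ← hsum2]; exact ENNReal.tsum_le_tsum hterm
    refine ⟨hLle, ?_⟩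
    intro hge u hu
    have hne : L θ₀ ≠ ⊤ := ne_top_of_le_ne_top ENNReal.ofReal_ne_top hLle
    have htoReal_le : (L θ₀).toReal ≤ Real.exp cst :=
      ENNReal.toReal_le_of_le_ofReal (Real.exp_pos _).le hLle
    have heq : L θ₀ = ENNReal.ofReal (Real.exp cst) := by
      have h1 : (L θ₀).toReal = Real.exp cst := le_antisymm htoReal_le hge
      rw [← ENNReal.ofReal_toReal hne, h1]
    by_contra hne2
    have hlt : ENNReal.ofReal (F u * Real.exp (∑ i, θ₀ i * (u i : ℝ))) <
        ENNReal.ofReal (F u * Real.exp cst) := by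
      refine lt_of_le_of_ne (hterm u) ?_
      intro habs
      apply hne2
      have h3 := (ENNReal.ofReal_eq_ofReal_iff
        (by positivity) (by positivity)).1 habs
      have h4 := mul_left_cancel₀ (ne_of_gt hu) h3
      exact Real.exp_injective h4
    have hfin : (∑' x : Fin d → ℤ,
        ENNReal.ofReal (F x * Real.exp (∑ i, θ₀ i * (x i : ℝ)))) ≠ ⊤ := by
      rw [← hL θ₀]; exact hne
    have hstrict := ENNReal.tsum_lt_tsum hfin hterm hlt
    rw [← hL θ₀, hsum2, ← heq] at hstrict
    exact lt_irrefl _ hstrict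
  have kill : ∀ (θ₀ : Fin d → ℝ) (cst : ℝ),
      (∀ u : Fin d → ℤ, 0 < F u → ∑ i, θ₀ i * (u i : ℝ) = cst) → θ₀ = 0 := by
    intro θ₀ cst hcc
    have hsub : ∀ z : Fin d → ℤ, ∑ i, θ₀ i * (z i : ℝ) = 0 := by
      intro z
      let G : AddSubgroup (Fin d → ℤ) :=
      { carrier := {w | ∑ i, θ₀ i * (w i : ℝ) = 0}
        zero_mem' := by simp
        add_mem' := by
          intro a c ha hc
          simp only [Set.mem_setOf_eq] at *
          have he : ∀ i, θ₀ i * (((a + c) i : ℤ) : ℝ)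
              = θ₀ i * (a i : ℝ) + θ₀ i * (c i : ℝ) := by
            intro i; push_cast [Pi.add_apply]; ring
          rw [Finset.sum_congr rfl fun i _ => he i, Finset.sum_add_distrib, ha, hc, add_zero]
        neg_mem' := by
          intro a ha
          simp only [Set.mem_setOf_eq] at *
          have he : ∀ i, θ₀ i * (((-a) i : ℤ) : ℝ) = -(θ₀ i * (a i : ℝ)) := by
            intro i; push_cast [Pi.neg_apply]; ring
          rw [Finset.sum_congr rfl fun i _ => he i, Finset.sum_neg_distrib, ha, neg_zero] }
      have hgen : {z : Fin d → ℤ | ∃ u v, 0 < F u ∧ 0 < F v ∧ z = u - v} ⊆ G := by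
        rintro _ ⟨u, v, hu, hv, rfl⟩
        show ∑ i, θ₀ i * (((u - v) i : ℤ) : ℝ) = 0
        have he : ∀ i, θ₀ i * (((u - v) i : ℤ) : ℝ)
            = θ₀ i * (u i : ℝ) - θ₀ i * (v i : ℝ) := by
          intro i; push_cast [Pi.sub_apply]; ring
        rw [Finset.sum_congr rfl fun i _ => he i, Finset.sum_sub_distrib,
          hcc u hu, hcc v hv, sub_self]
      have htop : (⊤ : AddSubgroup (Fin d → ℤ)) ≤ G := by
        rw [← haper]; exact (AddSubgroup.closure_le G).2 hgen
      exact htop (AddSubgroup.mem_top z)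
    funext j
    have hj := hsub (Pi.single j 1)
    rw [Finset.sum_eq_single j] at hj
    · simpa using hj
    · intro i _ hij
      rw [Pi.single_eq_of_ne hij]; simp
    · intro habs; exact absurd (Finset.mem_univ j) habs
  -- sequences
  set xx : ℕ → (Fin d → ℝ) := fun n => fun i => (s n i : ℝ) / n with hxxdef
  set zz : ℕ → (Fin d → ℝ) :=
    fun n => fun i => ((s n i : ℝ) + (b i : ℝ)) / ((n : ℝ) + (m : ℝ)) with hzzdef
  show Tendsto (fun n => ψ (zz n)) atTop (nhds (0 : EReal))
  set C0 : ℝ := max C 0 with hC0def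
  have hC0 : ∀ n : ℕ, 1 ≤ n → ∀ i, |xx n i| ≤ C0 := by
    intro n hn i
    calc |xx n i| ≤ ∑ j, |xx n j| :=
          Finset.single_le_sum (f := fun j => |xx n j|) (fun j _ => abs_nonneg _)
            (Finset.mem_univ i)
      _ ≤ C := hC n hn
      _ ≤ C0 := le_max_left _ _
  refine tendsto_order.2 ⟨?_, ?_⟩
  · intro a ha
    exact Filter.Eventually.of_forall fun n => lt_of_lt_of_le ha (hψ_nonneg _)
  intro a ha
  obtain ⟨ε, hε0, hεa⟩ := EReal.lt_iff_exists_real_btwn.1 ha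
  have hεr : (0 : ℝ) < ε := by exact_mod_cast hε0
  suffices hsuf : ∀ᶠ n in atTop, ψ (zz n) < (ε : EReal) by
    exact hsuf.mono fun n hn => lt_trans hn hεa
  by_contra hcon
  rw [Filter.not_eventually] at hcon
  obtain ⟨g, hgmono, hg⟩ := Filter.extraction_of_frequently_atTop hcon
  -- compactness
  have hK : IsCompact (Set.pi Set.univ fun _ : Fin d => Set.Icc (-C0) C0) :=
    isCompact_univ_pi fun _ => isCompact_Icc
  have hmem : ∀ k : ℕ, xx (g (k + 1)) ∈ Set.pi Set.univ fun _ : Fin d => Set.Icc (-C0) C0 := by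
    intro k i _
    have h1 : 1 ≤ g (k + 1) :=
      le_trans (Nat.succ_le_succ (Nat.zero_le k)) hgmono.le_apply
    have h2 := hC0 (g (k + 1)) h1 i
    rw [abs_le] at h2
    exact ⟨h2.1, h2.2⟩
  obtain ⟨xstar, _, φ2, hφ2mono, hφ2tend⟩ := hK.tendsto_subseq hmem
  set h : ℕ → ℕ := fun k => g (φ2 k + 1) with hhdef
  have hhmono : StrictMono h := fun p q hpq => hgmono (Nat.succ_lt_succ (hφ2mono hpq))
  have hh1 : ∀ k, 1 ≤ h k := fun k =>
    le_trans (Nat.succ_le_succ (Nat.zero_le _)) hgmono.le_apply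
  have hxtend : Tendsto (fun k => xx (h k)) atTop (nhds xstar) := hφ2tend
  have hhn : Tendsto (fun k => ((h k : ℕ) : ℝ)) atTop atTop :=
    tendsto_natCast_atTop_atTop.comp hhmono.tendsto_atTop
  have hztend : Tendsto (fun k => zz (h k)) atTop (nhds xstar) := by
    rw [tendsto_pi_nhds]
    intro i
    have T1 : Tendsto (fun k => xx (h k) i) atTop (nhds (xstar i)) :=
      tendsto_pi_nhds.1 hxtend i
    have T2 : Tendsto (fun k => (b i : ℝ) / (h k : ℝ)) atTop (nhds 0) :=
      tendsto_const_nhds.div_atTop hhn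
    have T3 : Tendsto (fun k => ((h k : ℝ) + (m : ℝ))) atTop atTop :=
      tendsto_atTop_add_const_right _ _ hhn
    have T4 : Tendsto (fun k => (m : ℝ) / ((h k : ℝ) + (m : ℝ))) atTop (nhds 0) :=
      tendsto_const_nhds.div_atTop T3
    have T5 : Tendsto (fun k => (h k : ℝ) / ((h k : ℝ) + (m : ℝ))) atTop (nhds 1) := by
      have heq : ∀ᶠ k in atTop,
          1 - (m : ℝ) / ((h k : ℝ) + (m : ℝ)) = (h k : ℝ) / ((h k : ℝ) + (m : ℝ)) := by
        filter_upwards [T3.eventually_ge_atTop 1] with k hk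
        have hne : ((h k : ℝ) + (m : ℝ)) ≠ 0 := by linarith
        field_simp
        ring
      refine Tendsto.congr' heq ?_
      have hT := (tendsto_const_nhds : Tendsto (fun _ : ℕ => (1:ℝ)) atTop (nhds 1)).sub T4
      simpa using hT
    have heq2 : ∀ᶠ k in atTop,
        (xx (h k) i + (b i : ℝ) / (h k : ℝ)) * ((h k : ℝ) / ((h k : ℝ) + (m : ℝ)))
          = zz (h k) i := by
      filter_upwards [T3.eventually_ge_atTop 1] with k hk
      have hne : ((h k : ℝ) + (m : ℝ)) ≠ 0 := by linarith
      have hk1 : (1 : ℝ) ≤ (h k : ℝ) := by exact_mod_cast hh1 k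
      have hne2 : (h k : ℝ) ≠ 0 := by linarith
      show ((s (h k) i : ℝ) / (h k : ℝ) + (b i : ℝ) / (h k : ℝ))
          * ((h k : ℝ) / ((h k : ℝ) + (m : ℝ)))
          = ((s (h k) i : ℝ) + (b i : ℝ)) / ((h k : ℝ) + (m : ℝ))
      field_simp
    refine Tendsto.congr' heq2 ?_
    have hT := (T1.add T2).mul T5
    simpa using hT
  have hgoodstar : ∀ θ, L θ ≠ ⊤ → ∑ i, θ i * xstar i ≤ Real.log (L θ).toReal := by
    intro θ hθ
    have hψk : Tendsto (fun k => ψ (xx (h k))) atTop (nhds (0 : EReal)) :=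
      hpsi.comp hhmono.tendsto_atTop
    have hip : Tendsto (fun k => ∑ i, θ i * xx (h k) i) atTop
        (nhds (∑ i, θ i * xstar i)) := by
      apply tendsto_finset_sum
      intro i _
      exact tendsto_const_nhds.mul (tendsto_pi_nhds.1 hxtend i)
    have hle2 : ∀ k, (((∑ i, θ i * xx (h k) i) - Real.log (L θ).toReal : ℝ) : EReal)
        ≤ ψ (xx (h k)) := fun k => term_le _ θ hθ
    have hlim : Tendsto
        (fun k => (((∑ i, θ i * xx (h k) i) - Real.log (L θ).toReal : ℝ) : EReal)) atTop
        (nhds (((∑ i, θ i * xstar i) - Real.log (L θ).toReal : ℝ) : EReal)) :=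
      EReal.tendsto_coe.2 (hip.sub tendsto_const_nhds)
    have hfin := le_of_tendsto_of_tendsto' hlim hψk hle2
    have hfin' : ((∑ i, θ i * xstar i) - Real.log (L θ).toReal : ℝ) ≤ 0 := by
      exact_mod_cast hfin
    linarith
  -- the support set and its convex hull
  set Sr : Set (Fin d → ℝ) := (fun u : Fin d → ℤ => fun i => (u i : ℝ)) '' {u | 0 < F u}
    with hSrdef
  have hCconv : Convex ℝ (convexHull ℝ Sr) := convex_convexHull ℝ Sr
  have hSrne : Sr.Nonempty := by
    obtain ⟨u, hu⟩ := hSne; exact ⟨_, ⟨u, hu, rfl⟩⟩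
  have good_hull : ∀ q ∈ convexHull ℝ Sr, ∃ M : ℝ, ∀ θ, L θ ≠ ⊤ →
      ∑ i, θ i * q i ≤ Real.log (L θ).toReal + M := by
    intro q hq
    rw [convexHull_eq] at hq
    obtain ⟨ι, t, w, zp, hw0, hw1, hzp, hcm⟩ := hq
    have hch : ∀ i ∈ t, ∃ u : Fin d → ℤ, 0 < F u ∧ (fun j => (u j : ℝ)) = zp i := by
      intro i hi; exact hzp i hi
    choose! uu huu1 huu2 using hch
    refine ⟨∑ i ∈ t, w i * (-Real.log (F (uu i))), ?_⟩
    intro θ hθ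
    have hq' : q = ∑ i ∈ t, w i • zp i := by
      rw [← hcm, Finset.centerMass_eq_of_sum_1 _ _ hw1]
    have happ : ∀ j, (∑ i ∈ t, w i • zp i) j = ∑ i ∈ t, w i * zp i j := by
      intro j; rw [Finset.sum_apply]; rfl
    have hiq : ∑ j, θ j * q j = ∑ i ∈ t, w i * (∑ j, θ j * zp i j) := by
      rw [hq']
      calc ∑ j, θ j * (∑ i ∈ t, w i • zp i) j
          = ∑ j, ∑ i ∈ t, θ j * (w i * zp i j) := by
            refine Finset.sum_congr rfl fun j _ => ?_
            rw [happ j, Finset.mul_sum]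
        _ = ∑ i ∈ t, ∑ j, θ j * (w i * zp i j) := Finset.sum_comm
        _ = ∑ i ∈ t, w i * (∑ j, θ j * zp i j) := by
            refine Finset.sum_congr rfl fun i _ => ?_
            rw [Finset.mul_sum]
            exact Finset.sum_congr rfl fun j _ => by ring
    rw [hiq]
    have hbound : ∀ i ∈ t, w i * (∑ j, θ j * zp i j)
        ≤ w i * (Real.log (L θ).toReal + (-Real.log (F (uu i)))) := by
      intro i hi
      refine mul_le_mul_of_nonneg_left ?_ (hw0 i hi)
      have h3 : ∀ j, zp i j = ((uu i) j : ℝ) := by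
        intro j; rw [← huu2 i hi]
      simp only [h3]
      exact good_pt θ hθ (uu i) (huu1 i hi)
    calc ∑ i ∈ t, w i * (∑ j, θ j * zp i j)
        ≤ ∑ i ∈ t, w i * (Real.log (L θ).toReal + (-Real.log (F (uu i)))) :=
          Finset.sum_le_sum hbound
      _ = Real.log (L θ).toReal + ∑ i ∈ t, w i * (-Real.log (F (uu i))) := by
          rw [Finset.sum_congr rfl fun i _ => mul_add (w i) _ _,
            Finset.sum_add_distrib, ← Finset.sum_mul, hw1, one_mul]
  -- representation of vectors as sums of single
  have hrep : ∀ y : Fin d → ℝ, y = ∑ j, y j • (Pi.single j 1 : Fin d → ℝ) := by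
    intro y
    funext i
    rw [Finset.sum_apply]
    have he : ∀ j, (y j • (Pi.single j 1 : Fin d → ℝ)) i
        = if i = j then y i else 0 := by
      intro j
      rcases eq_or_ne i j with rfl | hij
      · simp
      · rw [Pi.smul_apply, Pi.single_eq_of_ne hij]; simp [hij]
    rw [Finset.sum_congr rfl fun j _ => he j]
    simp
  -- span
  have hspan : affineSpan ℝ Sr = ⊤ := by
    rw [AffineSubspace.affineSpan_eq_top_iff_vectorSpan_eq_top_of_nonempty ℝ _ _ hSrne]
    rw [Submodule.eq_top_iff']
    intro y
    have hsingle : ∀ j : Fin d, (Pi.single j 1 : Fin d → ℝ) ∈ vectorSpan ℝ Sr := by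
      intro j
      let castHom : (Fin d → ℤ) →+ (Fin d → ℝ) :=
      { toFun := fun z => fun i => (z i : ℝ)
        map_zero' := by funext i; simp
        map_add' := by intro p q; funext i; push_cast [Pi.add_apply]; simp }
      let G := AddSubgroup.comap castHom (vectorSpan ℝ Sr).toAddSubgroup
      have hgen : {z : Fin d → ℤ | ∃ u v, 0 < F u ∧ 0 < F v ∧ z = u - v} ⊆ G := by
        rintro _ ⟨u, v, hu, hv, rfl⟩
        show castHom (u - v) ∈ (vectorSpan ℝ Sr).toAddSubgroup
        have he : castHom (u - v) = (fun i => (u i : ℝ)) - (fun i => (v i : ℝ)) := by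
          funext i
          show (((u - v) i : ℤ) : ℝ) = (u i : ℝ) - (v i : ℝ)
          push_cast [Pi.sub_apply]; ring
        rw [he]
        have hmem : ((fun i => (u i : ℝ)) : Fin d → ℝ) -ᵥ (fun i => (v i : ℝ)) ∈ Sr -ᵥ Sr :=
          Set.vsub_mem_vsub ⟨u, hu, rfl⟩ ⟨v, hv, rfl⟩
        rw [vectorSpan_def]
        exact Submodule.subset_span hmem
      have htop : (⊤ : AddSubgroup (Fin d → ℤ)) ≤ G := by
        rw [← haper]; exact (AddSubgroup.closure_le G).2 hgen
      have hmem2 := htop (AddSubgroup.mem_top (Pi.single j 1))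
      have hc : castHom (Pi.single j 1) = (Pi.single j 1 : Fin d → ℝ) := by
        funext i
        show ((Pi.single j 1 : Fin d → ℤ) i : ℝ) = (Pi.single j 1 : Fin d → ℝ) i
        rcases eq_or_ne i j with rfl | hij
        · simp
        · rw [Pi.single_eq_of_ne hij, Pi.single_eq_of_ne hij]; simp
      have hmem3 := AddSubgroup.mem_comap.1 hmem2
      rw [hc] at hmem3
      exact hmem3
    rw [hrep y]
    exact Submodule.sum_mem _ fun j _ => Submodule.smul_mem _ _ (hsingle j)
  have hintne : (interior (convexHull ℝ Sr)).Nonempty := by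
    rw [hCconv.interior_nonempty_iff_affineSpan_eq_top, affineSpan_convexHull]
    exact hspan
  have hxint : xstar ∈ interior (convexHull ℝ Sr) := by
    by_contra hnot
    obtain ⟨f, hf⟩ := geometric_hahn_banach_open_point hCconv.interior isOpen_interior hnot
    obtain ⟨a₀, ha₀⟩ := hintne
    have hhull_le : ∀ y ∈ convexHull ℝ Sr, f y ≤ f xstar := by
      intro y hy
      by_contra hgt
      push_neg at hgt
      set δ := f y - f xstar with hδdef
      have hδpos : 0 < δ := by simp only [hδdef]; linarith
      set t : ℝ := min 1 (δ / (2 * (|f a₀ - f y| + 1))) with htdef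
      have htpos : 0 < t := lt_min one_pos (by positivity)
      have ht1 : t ≤ 1 := min_le_left _ _
      have hmem2 : (1 - t) • y + t • a₀ ∈ interior (convexHull ℝ Sr) := by
        have hsub := hCconv.combo_self_interior_subset_interior
          (a := 1 - t) (b := t) (by linarith) htpos (by ring)
        exact hsub (Set.add_mem_add (Set.smul_mem_smul_set hy) (Set.smul_mem_smul_set ha₀))
      have hflt := hf _ hmem2
      rw [map_add, map_smul, map_smul, smul_eq_mul, smul_eq_mul] at hflt
      have habs : t * |f a₀ - f y| ≤ δ / 2 := by
        have h1 : t ≤ δ / (2 * (|f a₀ - f y| + 1)) := min_le_right _ _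
        have h2 : (0:ℝ) ≤ |f a₀ - f y| := abs_nonneg _
        calc t * |f a₀ - f y|
            ≤ (δ / (2 * (|f a₀ - f y| + 1))) * |f a₀ - f y| :=
              mul_le_mul_of_nonneg_right h1 h2
          _ ≤ δ / 2 := by
              rw [div_mul_eq_mul_div, div_le_div_iff₀ (by positivity) (by norm_num)]
              nlinarith
      have h3 : -(t * |f a₀ - f y|) ≤ t * (f a₀ - f y) := by
        have h4 := neg_abs_le (f a₀ - f y)
        nlinarith
      nlinarith
    set θ₀ : Fin d → ℝ := fun i => f (Pi.single i 1) with hθ₀def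
    have hfrep : ∀ y : Fin d → ℝ, f y = ∑ i, θ₀ i * y i := by
      intro y
      conv_lhs => rw [hrep y]
      rw [map_sum]
      refine Finset.sum_congr rfl fun j _ => ?_
      rw [map_smul, smul_eq_mul]
      ring
    have hle : ∀ u : Fin d → ℤ, 0 < F u → ∑ i, θ₀ i * (u i : ℝ) ≤ f xstar := by
      intro u hu
      have hmem3 : ((fun i => (u i : ℝ)) : Fin d → ℝ) ∈ convexHull ℝ Sr :=
        subset_convexHull ℝ Sr ⟨u, hu, rfl⟩
      have h2 := hhull_le _ hmem3
      rw [hfrep] at h2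
      exact h2
    obtain ⟨hLle, hkey2⟩ := key θ₀ (f xstar) hle
    have hne : L θ₀ ≠ ⊤ := ne_top_of_le_ne_top ENNReal.ofReal_ne_top hLle
    have hstar := hgoodstar θ₀ hne
    rw [← hfrep xstar] at hstar
    have hexp : Real.exp (f xstar) ≤ (L θ₀).toReal := by
      have hpos : 0 < (L θ₀).toReal := by
        obtain ⟨u, hu⟩ := hSne
        have h4 : ENNReal.ofReal (F u * Real.exp (∑ i, θ₀ i * (u i : ℝ))) ≤ L θ₀ := by
          rw [hL θ₀]; exact ENNReal.le_tsum u
        have h5 : (0 : ℝ≥0∞) < L θ₀ :=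
          lt_of_lt_of_le (ENNReal.ofReal_pos.2 (by positivity)) h4
        exact ENNReal.toReal_pos h5.ne' hne
      calc Real.exp (f xstar) ≤ Real.exp (Real.log (L θ₀).toReal) := Real.exp_le_exp.2 hstar
        _ = (L θ₀).toReal := Real.exp_log hpos
    have hall := hkey2 hexp
    have hzero := kill θ₀ (f xstar) hall
    have hfa : f a₀ < f xstar := hf a₀ ha₀
    rw [hfrep a₀, hfrep xstar, hzero] at hfa
    simp at hfa
  -- a ball around xstar inside the hull
  obtain ⟨ρ, hρpos, hball⟩ := Metric.isOpen_iff.1 isOpen_interior xstar hxint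
  set ρ' : ℝ := ρ / 2 with hρ'def
  have hρ'pos : 0 < ρ' := by positivity
  have hcorner : ∀ v : Fin d → ℝ, (∀ i, |v i| ≤ ρ') → xstar + v ∈ convexHull ℝ Sr := by
    intro v hv
    apply interior_subset
    apply hball
    rw [Metric.mem_ball, dist_pi_lt_iff hρpos]
    intro i
    rw [Real.dist_eq, Pi.add_apply, show xstar i + v i - xstar i = v i by ring]
    calc |v i| ≤ ρ' := hv i
      _ < ρ := by rw [hρ'def]; linarith
  have hsingle_bd : ∀ (j : Fin d) (σ : ℝ), |σ| = 1 →
      ∀ i, |σ * ρ' * (Pi.single j 1 : Fin d → ℝ) i| ≤ ρ' := by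
    intro j σ hσ i
    rcases eq_or_ne i j with rfl | hij
    · rw [Pi.single_eq_same, mul_one, abs_mul, hσ, one_mul, abs_of_pos hρ'pos]
    · rw [Pi.single_eq_of_ne hij, mul_zero, abs_zero]; exact hρ'pos.le
  have hsum_single : ∀ (θ : Fin d → ℝ) (j : Fin d) (σ : ℝ),
      ∑ i, θ i * (xstar + fun i => σ * ρ' * (Pi.single j 1 : Fin d → ℝ) i) i
        = (∑ i, θ i * xstar i) + σ * ρ' * θ j := by
    intro θ j σ
    have e1 : ∀ i, θ i * (xstar + fun i => σ * ρ' * (Pi.single j 1 : Fin d → ℝ) i) i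
        = θ i * xstar i + θ i * (σ * ρ' * (Pi.single j 1 : Fin d → ℝ) i) := by
      intro i; rw [Pi.add_apply]; ring
    rw [Finset.sum_congr rfl fun i _ => e1 i, Finset.sum_add_distrib]
    congr 1
    rw [Finset.sum_eq_single j]
    · rw [Pi.single_eq_same]; ring
    · intro i _ hij; rw [Pi.single_eq_of_ne hij]; ring
    · intro habs; exact absurd (Finset.mem_univ j) habs
  have hqpexists : ∀ j : Fin d, ∃ M : ℝ, ∀ θ : Fin d → ℝ, L θ ≠ ⊤ →
      (∑ i, θ i * xstar i) + ρ' * θ j ≤ Real.log (L θ).toReal + M := by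
    intro j
    have hmem4 := hcorner (fun i => 1 * ρ' * (Pi.single j 1 : Fin d → ℝ) i)
      (hsingle_bd j 1 (by norm_num))
    obtain ⟨M, hM⟩ := good_hull _ hmem4
    refine ⟨M, fun θ hθ => ?_⟩
    have h2 := hM θ hθ
    rw [hsum_single θ j 1] at h2
    linarith
  have hqmexists : ∀ j : Fin d, ∃ M : ℝ, ∀ θ : Fin d → ℝ, L θ ≠ ⊤ →
      (∑ i, θ i * xstar i) - ρ' * θ j ≤ Real.log (L θ).toReal + M := by
    intro j
    have hmem4 := hcorner (fun i => (-1) * ρ' * (Pi.single j 1 : Fin d → ℝ) i)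
      (hsingle_bd j (-1) (by norm_num))
    obtain ⟨M, hM⟩ := good_hull _ hmem4
    refine ⟨M, fun θ hθ => ?_⟩
    have h2 := hM θ hθ
    rw [hsum_single θ j (-1)] at h2
    linarith
  choose Mp hMp using hqpexists
  choose Mm hMm using hqmexists
  set Mbar : ℝ := 1 + ∑ j, (|Mp j| + |Mm j|) with hMbardef
  have hsumnn : (0:ℝ) ≤ ∑ j, (|Mp j| + |Mm j|) :=
    Finset.sum_nonneg fun j _ => add_nonneg (abs_nonneg _) (abs_nonneg _)
  have hMbar1 : (1:ℝ) ≤ Mbar := by rw [hMbardef]; linarith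
  have hMbarpos : (0:ℝ) < Mbar := by linarith
  have hMple : ∀ j, Mp j ≤ Mbar := by
    intro j
    have h1 : |Mp j| + |Mm j| ≤ ∑ j', (|Mp j'| + |Mm j'|) :=
      Finset.single_le_sum (f := fun j' => |Mp j'| + |Mm j'|)
        (fun j' _ => add_nonneg (abs_nonneg _) (abs_nonneg _)) (Finset.mem_univ j)
    have h2 := le_abs_self (Mp j)
    have h3 := abs_nonneg (Mm j)
    rw [hMbardef]; linarith
  have hMmle : ∀ j, Mm j ≤ Mbar := by
    intro j
    have h1 : |Mp j| + |Mm j| ≤ ∑ j', (|Mp j'| + |Mm j'|) :=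
      Finset.single_le_sum (f := fun j' => |Mp j'| + |Mm j'|)
        (fun j' _ => add_nonneg (abs_nonneg _) (abs_nonneg _)) (Finset.mem_univ j)
    have h2 := le_abs_self (Mm j)
    have h3 := abs_nonneg (Mp j)
    rw [hMbardef]; linarith
  -- the final local estimate
  have final : ∀ y : Fin d → ℝ, (∑ i, |y i - xstar i|) ≤ ρ' →
      ψ y ≤ (((∑ i, |y i - xstar i|) / ρ' * Mbar : ℝ) : EReal) := by
    intro y hy
    apply ψ_le_of_good
    intro θ hθ
    set A : ℝ := Real.log (L θ).toReal - ∑ i, θ i * xstar i with hAdef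
    have hA0 : 0 ≤ A := by
      have h1 := hgoodstar θ hθ; rw [hAdef]; linarith
    have hθbound : ∀ j, |θ j| * ρ' ≤ A + Mbar := by
      intro j
      have h1 := hMp j θ hθ
      have h2 := hMm j θ hθ
      rcases abs_cases (θ j) with ⟨he, _⟩ | ⟨he, _⟩
      · rw [he]
        have := hMple j
        rw [hAdef]; nlinarith
      · rw [he]
        have := hMmle j
        rw [hAdef]; nlinarith
    have hsplit : ∑ i, θ i * y i = (∑ i, θ i * xstar i) + ∑ i, θ i * (y i - xstar i) := by
      rw [← Finset.sum_add_distrib]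
      exact Finset.sum_congr rfl fun i _ => by ring
    have hterm2 : ∑ i, θ i * (y i - xstar i)
        ≤ (∑ i, |y i - xstar i|) * ((A + Mbar) / ρ') := by
      calc ∑ i, θ i * (y i - xstar i) ≤ ∑ i, |θ i| * |y i - xstar i| := by
            refine Finset.sum_le_sum fun i _ => ?_
            calc θ i * (y i - xstar i) ≤ |θ i * (y i - xstar i)| := le_abs_self _
              _ = |θ i| * |y i - xstar i| := abs_mul _ _
        _ ≤ ∑ i, ((A + Mbar) / ρ') * |y i - xstar i| := by
            refine Finset.sum_le_sum fun i _ => ?_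
            refine mul_le_mul_of_nonneg_right ?_ (abs_nonneg _)
            rw [le_div_iff₀ hρ'pos]
            exact hθbound i
        _ = (∑ i, |y i - xstar i|) * ((A + Mbar) / ρ') := by
            rw [Finset.sum_mul]
            exact Finset.sum_congr rfl fun i _ => by ring
    have hS1ρ : (∑ i, |y i - xstar i|) / ρ' ≤ 1 := by
      rw [div_le_one hρ'pos]; exact hy
    have hS10 : 0 ≤ ∑ i, |y i - xstar i| :=
      Finset.sum_nonneg fun i _ => abs_nonneg _
    have hexpand : (∑ i, |y i - xstar i|) * ((A + Mbar) / ρ')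
        = (∑ i, |y i - xstar i|) / ρ' * A + (∑ i, |y i - xstar i|) / ρ' * Mbar := by
      rw [← mul_div_assoc, mul_add, div_mul_eq_mul_div, div_mul_eq_mul_div, ← add_div]
    have hAterm : (∑ i, |y i - xstar i|) / ρ' * A ≤ A :=
      mul_le_of_le_one_left hA0 hS1ρ
    rw [hsplit]
    have hAe : ∑ i, θ i * xstar i = Real.log (L θ).toReal - A := by rw [hAdef]; ring
    rw [hAe]
    linarith [hterm2, hexpand, hAterm]
  -- conclusion
  set δ : ℝ := min ρ' (ρ' * ε / (2 * Mbar)) with hδdef2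
  have hδpos : 0 < δ :=
    lt_min hρ'pos (div_pos (mul_pos hρ'pos hεr) (by linarith))
  have htendS : Tendsto (fun k => ∑ i, |zz (h k) i - xstar i|) atTop (nhds 0) := by
    have h0 : (0:ℝ) = ∑ _i : Fin d, (0:ℝ) := by simp
    rw [h0]
    apply tendsto_finset_sum
    intro i _
    have h1 : Tendsto (fun k => zz (h k) i - xstar i) atTop (nhds 0) := by
      have h2 := (tendsto_pi_nhds.1 hztend i).sub
        ((tendsto_const_nhds : Tendsto (fun _ : ℕ => xstar i) atTop (nhds (xstar i))))
      simpa using h2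
    have h3 := h1.abs
    simpa using h3
  have hev := htendS.eventually_lt_const hδpos
  obtain ⟨k, hk⟩ := hev.exists
  have h1 : (∑ i, |zz (h k) i - xstar i|) ≤ ρ' := le_trans hk.le (min_le_left _ _)
  have h2 := final (zz (h k)) h1
  have h3 : (∑ i, |zz (h k) i - xstar i|) / ρ' * Mbar < ε := by
    have hklt : (∑ i, |zz (h k) i - xstar i|) ≤ ρ' * ε / (2 * Mbar) :=
      le_trans hk.le (min_le_right _ _)
    have hS10 : 0 ≤ ∑ i, |zz (h k) i - xstar i| :=
      Finset.sum_nonneg fun i _ => abs_nonneg _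
    calc (∑ i, |zz (h k) i - xstar i|) / ρ' * Mbar
        ≤ (ρ' * ε / (2 * Mbar)) / ρ' * Mbar := by
          have h5 : (∑ i, |zz (h k) i - xstar i|) / ρ'
              ≤ (ρ' * ε / (2 * Mbar)) / ρ' := by
            exact (div_le_div_iff_of_pos_right hρ'pos).2 hklt
          exact mul_le_mul_of_nonneg_right h5 hMbarpos.le
      _ = ε / (2 * Mbar) * Mbar := by
          rw [mul_div_assoc, mul_div_cancel_left₀ _ (ne_of_gt hρ'pos)]
      _ = ε / 2 := by
          rw [div_mul_eq_mul_div, mul_comm 2 Mbar, ← div_div, mul_div_assoc,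
            div_self (ne_of_gt hMbarpos), mul_one]
      _ < ε := by linarith
  have h4 : ψ (zz (h k)) < (ε : EReal) :=
    lt_of_le_of_lt h2 (EReal.coe_lt_coe_iff.2 h3)
  exact hg (φ2 k + 1) h4
end

section
/- Let (Y_ℓ) be i.i.d. random variables on N^d × N^{d-1} with law: V = v_i with probability a_i (where v_i is the i-th basis vector of N^{d-1} for i < d, and v_d = 0), and conditionally on V = v_i, U ~ p^{(i)}. If the d-type offspring distribution p = (p^{(i)}) is aperiodic (the subgroup of Z^d generated by ∪_i (supp p^{(i)} - supp p^{(i)}) is Z^d) and a > 0 with Σ a_i = 1, then the law of Y = (U,V) on Z^{2d-1} is aperiodic. -/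
/-- if the `d`-type offspring distribution `p` is aperiodic and
`a` is a positive probability vector on `[d]`, then the law of `Y = (U, V)` on
`ℤ^d × ℤ^{d-1} ≅ ℤ^{2d-1}` is aperiodic, where `P(V = v_i) = a_i` (with `v_i`
the `i`-th basis vector for `i < d` and `v_d = 0`) and `U ~ p^{(i)}`
conditionally on `V = v_i`. -/
theorem law_of_Y_aperiodic
    (d : ℕ) (hd : 1 ≤ d)
    (p : Fin d → (Fin d → ℤ) → ℝ)
    (hp0 : ∀ i x, 0 ≤ p i x) (hp1 : ∀ i, ∑' x, p i x = 1)
    (hpnn : ∀ i x, p i x ≠ 0 → ∀ j, 0 ≤ x j)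
    (hpaper : AddSubgroup.closure
        (⋃ i : Fin d, {z : Fin d → ℤ | ∃ u v, 0 < p i u ∧ 0 < p i v ∧ z = u - v})
        = ⊤)
    (a : Fin d → ℝ) (ha : ∀ i, 0 < a i) (ha1 : ∑ i, a i = 1)
    (v : Fin d → (Fin (d - 1) → ℤ))
    (hv : ∀ i j, v i j = if (i : ℕ) = (j : ℕ) then 1 else 0)
    (F : (Fin d → ℤ) × (Fin (d - 1) → ℤ) → ℝ)
    (hF : ∀ u w, F (u, w) = ∑ i, if w = v i then a i * p i u else 0) :
    AddSubgroup.closure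
      {z : (Fin d → ℤ) × (Fin (d - 1) → ℤ) | ∃ y y', 0 < F y ∧ 0 < F y' ∧
        z = y - y'} = ⊤ := by

  classical
  set S := {z : (Fin d → ℤ) × (Fin (d - 1) → ℤ) | ∃ y y', 0 < F y ∧ 0 < F y' ∧
        z = y - y'} with hSdef
  set C := AddSubgroup.closure S with hCdef
  -- support of each p i is nonempty
  have hsupp : ∀ i, ∃ u, 0 < p i u := by
    intro i
    by_contra h
    push_neg at h
    have hz : ∀ x, p i x = 0 := fun x => le_antisymm (h x) (hp0 i x)
    have := hp1 i
    simp only [hz, tsum_zero] at this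
    norm_num at this
  -- F positive on (u, v i) when p i u > 0
  have hFpos : ∀ i u, 0 < p i u → 0 < F (u, v i) := by
    intro i u hu
    rw [hF]
    have hle : a i * p i u ≤ ∑ j, if v i = v j then a j * p j u else 0 := by
      have h := Finset.single_le_sum (f := fun j => if v i = v j then a j * p j u else 0)
        (fun j _ => by
          by_cases h : v i = v j <;>
            simp [h, mul_nonneg (ha j).le (hp0 j u)]) (Finset.mem_univ i)
      simpa using h
    exact lt_of_lt_of_le (mul_pos (ha i) hu) hle
  -- (x, 0) ∈ C for all x
  have hfst : ∀ x : Fin d → ℤ, ((x, 0) : (Fin d → ℤ) × (Fin (d - 1) → ℤ)) ∈ C := by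
    intro x
    have hsub : (AddMonoidHom.inl (Fin d → ℤ) (Fin (d - 1) → ℤ)) ''
        (⋃ i : Fin d, {z : Fin d → ℤ | ∃ u v, 0 < p i u ∧ 0 < p i v ∧ z = u - v}) ⊆ S := by
      rintro z ⟨w, hw, rfl⟩
      simp only [Set.mem_iUnion, Set.mem_setOf_eq] at hw
      obtain ⟨i, u, u', hu, hu', rfl⟩ := hw
      exact ⟨(u, v i), (u', v i), hFpos i u hu, hFpos i u' hu', by
        simp [Prod.ext_iff, AddMonoidHom.inl]⟩
    have hx : x ∈ AddSubgroup.closure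
        (⋃ i : Fin d, {z : Fin d → ℤ | ∃ u v, 0 < p i u ∧ 0 < p i v ∧ z = u - v}) := by
      rw [hpaper]; trivial
    have := AddSubgroup.mem_map_of_mem (AddMonoidHom.inl (Fin d → ℤ) (Fin (d - 1) → ℤ)) hx
    rw [AddMonoidHom.map_closure] at this
    exact AddSubgroup.closure_mono hsub this
  -- v of the last index is 0
  have hlast : v ⟨d - 1, Nat.sub_lt hd one_pos⟩ = 0 := by
    funext j
    rw [hv]
    have : (j : ℕ) < d - 1 := j.isLt
    simp only [Pi.zero_apply, ite_eq_right_iff]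
    intro h
    omega
  -- (0, v i) ∈ C for all i
  have hvmem : ∀ i, ((0, v i) : (Fin d → ℤ) × (Fin (d - 1) → ℤ)) ∈ C := by
    intro i
    obtain ⟨u, hu⟩ := hsupp i
    obtain ⟨u', hu'⟩ := hsupp ⟨d - 1, Nat.sub_lt hd one_pos⟩
    have h1 : ((u - u', v i) : (Fin d → ℤ) × (Fin (d - 1) → ℤ)) ∈ C := by
      apply AddSubgroup.subset_closure
      refine ⟨(u, v i), (u', v ⟨d - 1, Nat.sub_lt hd one_pos⟩), hFpos i u hu,
        hFpos _ u' hu', ?_⟩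
      simp [Prod.ext_iff, hlast]
    have h2 := hfst (u - u')
    have := sub_mem h1 h2
    simpa using this
  -- (0, w) ∈ C for all w
  have hsnd : ∀ w : Fin (d - 1) → ℤ, ((0, w) : (Fin d → ℤ) × (Fin (d - 1) → ℤ)) ∈ C := by
    intro w
    have hrep : ((0, w) : (Fin d → ℤ) × (Fin (d - 1) → ℤ)) =
        ∑ j : Fin (d - 1), w j • ((0, v ⟨(j : ℕ), lt_of_lt_of_le j.isLt (Nat.sub_le d 1)⟩) :
          (Fin d → ℤ) × (Fin (d - 1) → ℤ)) := by
      have hvj : ∀ j : Fin (d - 1),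
          v ⟨(j : ℕ), lt_of_lt_of_le j.isLt (Nat.sub_le d 1)⟩ =
            (fun j' => if j = j' then 1 else 0) := by
        intro j
        funext j'
        rw [hv]
        simp [Fin.val_eq_val]
      refine Prod.ext ?_ ?_
      · rw [Prod.fst_sum]
        simp
      · rw [Prod.snd_sum]
        simp only [Prod.smul_snd, hvj]
        exact pi_eq_sum_univ w
    rw [hrep]
    exact sum_mem (fun j _ => zsmul_mem (hvmem _) _)
  rw [eq_top_iff]
  rintro ⟨x, w⟩ -
  have := add_mem (hfst x) (hsnd w)
  simpa using this
end
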